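/- arXiv:2404.06457 — 5 statements merged into one kernel-verified Lean document; each statement's English description precedes it below -/
import Mathlib

section
/- Let $w \in \mathbb{R}^n$ with $w_i \ge 0$ for all $i$, and let $X_1,\dots,X_n \in [-1,1]$ be exchangeable with $\bar{X} = \frac{1}{n}\sum_{i=1}^n X_i$. Then for any $\lambda \in \mathbb{R}$, $\mathbb{E}[\exp\{\lambda \sum_{i=1}^n w_i(X_i - \bar{X})\}] \le \exp\{\frac{\lambda^2}{2}\|w\|_2^2\}$. -/
open MeasureTheory

lemma hmg_D_pos (p : ℝ) (hp0 : 0 ≤ p) (hp1 : p ≤ 1) (t : ℝ) :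
    0 < 1 - p + p * Real.exp t := by
  rcases lt_or_ge p 1 with h | h
  · have := mul_nonneg hp0 (Real.exp_pos t).le
    linarith
  · have hp : p = 1 := le_antisymm hp1 h
    subst hp
    simpa using Real.exp_pos t

lemma hmg_core (p : ℝ) (hp0 : 0 ≤ p) (hp1 : p ≤ 1) (h : ℝ) :
    Real.exp (-(p * h)) * (1 - p + p * Real.exp h) ≤ Real.exp (h ^ 2 / 8) := by
  have hD := hmg_D_pos p hp0 hp1
  set f : ℝ → ℝ := fun t => t ^ 2 / 8 + p * t - Real.log (1 - p + p * Real.exp t) with hfdef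
  set f' : ℝ → ℝ := fun t => t / 4 + p - p * Real.exp t / (1 - p + p * Real.exp t) with hf'def
  have hderiv : ∀ t, HasDerivAt f (f' t) t := by
    intro t
    have h1 : HasDerivAt (fun t : ℝ => 1 - p + p * Real.exp t) (p * Real.exp t) t := by
      simpa using ((Real.hasDerivAt_exp t).const_mul p).const_add (1 - p)
    have h2 : HasDerivAt (fun t : ℝ => Real.log (1 - p + p * Real.exp t))
        (p * Real.exp t / (1 - p + p * Real.exp t)) t := h1.log (hD t).ne'
    have h3 : HasDerivAt (fun t : ℝ => t ^ 2 / 8 + p * t) (t / 4 + p) t := by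
      have := ((hasDerivAt_pow 2 t).div_const 8).add ((hasDerivAt_id t).const_mul p)
      exact this.congr_deriv (by rw [show (2:ℕ) - 1 = 1 from rfl]; push_cast; ring)
    exact h3.sub h2
  have hderiv' : ∀ t, HasDerivAt f'
      (1 / 4 - p * Real.exp t * (1 - p) / (1 - p + p * Real.exp t) ^ 2) t := by
    intro t
    have h1 : HasDerivAt (fun t : ℝ => 1 - p + p * Real.exp t) (p * Real.exp t) t := by
      simpa using ((Real.hasDerivAt_exp t).const_mul p).const_add (1 - p)
    have h0 : HasDerivAt (fun t : ℝ => p * Real.exp t) (p * Real.exp t) t :=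
      (Real.hasDerivAt_exp t).const_mul p
    have h2 : HasDerivAt (fun t : ℝ => p * Real.exp t / (1 - p + p * Real.exp t))
        ((p * Real.exp t * (1 - p + p * Real.exp t) - p * Real.exp t * (p * Real.exp t)) /
          (1 - p + p * Real.exp t) ^ 2) t := h0.div h1 (hD t).ne'
    have h3 : HasDerivAt (fun t : ℝ => t / 4 + p) (1 / 4) t := by
      simpa using ((hasDerivAt_id t).div_const 4).add_const p
    have h4 := h3.sub h2
    exact h4.congr_deriv (by ring)
  have hf''_nonneg : ∀ t, 0 ≤ 1 / 4 - p * Real.exp t * (1 - p) / (1 - p + p * Real.exp t) ^ 2 := by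
    intro t
    rw [sub_nonneg, div_le_iff₀ (pow_pos (hD t) 2)]
    nlinarith [sq_nonneg ((1 - p) - p * Real.exp t), (Real.exp_pos t).le]
  have hf'mono : Monotone f' :=
    monotone_of_deriv_nonneg (fun t => (hderiv' t).differentiableAt)
      (fun t => by rw [(hderiv' t).deriv]; exact hf''_nonneg t)
  have hf'0 : f' 0 = 0 := by
    simp [hf'def]
  have hfcont : Continuous f := by
    have : Differentiable ℝ f := fun t => (hderiv t).differentiableAt
    exact this.continuous
  have hf0 : f 0 = 0 := by simp [hfdef]
  have hfnonneg : ∀ t, 0 ≤ f t := by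
    intro t
    rcases le_total 0 t with ht | ht
    · have hmono : MonotoneOn f (Set.Ici 0) :=
        monotoneOn_of_deriv_nonneg (convex_Ici 0) hfcont.continuousOn
          (fun x _ => (hderiv x).differentiableAt.differentiableWithinAt)
          (fun x hx => by
            rw [(hderiv x).deriv]
            rw [interior_Ici] at hx
            have : f' 0 ≤ f' x := hf'mono (le_of_lt hx)
            linarith [hf'0 ▸ this])
      have := hmono (Set.self_mem_Ici) (Set.mem_Ici.2 ht) ht
      linarith [hf0 ▸ this]
    · have hanti : AntitoneOn f (Set.Iic 0) :=
        antitoneOn_of_deriv_nonpos (convex_Iic 0) hfcont.continuousOn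
          (fun x _ => (hderiv x).differentiableAt.differentiableWithinAt)
          (fun x hx => by
            rw [(hderiv x).deriv]
            rw [interior_Iic] at hx
            have : f' x ≤ f' 0 := hf'mono (le_of_lt hx)
            linarith [hf'0 ▸ this])
      have := hanti (Set.mem_Iic.2 ht) Set.self_mem_Iic ht
      linarith [hf0 ▸ this]
  have hlog : Real.log (1 - p + p * Real.exp h) ≤ h ^ 2 / 8 + p * h := by
    have := hfnonneg h
    simp only [hfdef] at this
    linarith
  calc Real.exp (-(p * h)) * (1 - p + p * Real.exp h)
      = Real.exp (-(p * h) + Real.log (1 - p + p * Real.exp h)) := by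
        rw [Real.exp_add, Real.exp_log (hD h)]
    _ ≤ Real.exp (h ^ 2 / 8) := by
        apply Real.exp_le_exp.2
        linarith

lemma hmg_disc {n : ℕ} (hn : 0 < n) (y : Fin n → ℝ) (a b t : ℝ)
    (hy : ∀ j, y j ∈ Set.Icc a b) (hsum : ∑ j, y j = 0) :
    ∑ j, Real.exp (t * y j) ≤ (n : ℝ) * Real.exp (t ^ 2 * (b - a) ^ 2 / 8) := by
  have j0 : Fin n := ⟨0, hn⟩
  have hnpos : (0 : ℝ) < n := by exact_mod_cast hn
  have hab : a ≤ b := le_trans (hy j0).1 (hy j0).2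
  have ha0 : a ≤ 0 := by
    by_contra hcon
    push_neg at hcon
    have : (0 : ℝ) < ∑ j, y j := by
      calc (0 : ℝ) < (n : ℝ) * a := by positivity
        _ = ∑ _j : Fin n, a := by simp [mul_comm]
        _ ≤ ∑ j, y j := Finset.sum_le_sum fun j _ => (hy j).1
    rw [hsum] at this; exact lt_irrefl 0 this
  have hb0 : 0 ≤ b := by
    by_contra hcon
    push_neg at hcon
    have : ∑ j, y j < 0 := by
      calc ∑ j, y j ≤ ∑ _j : Fin n, b := Finset.sum_le_sum fun j _ => (hy j).2
        _ = (n : ℝ) * b := by simp [mul_comm]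
        _ < 0 := by nlinarith
    rw [hsum] at this; exact lt_irrefl 0 this
  rcases eq_or_lt_of_le hab with heq | hlt
  · have ha : a = 0 := le_antisymm ha0 (heq ▸ hb0)
    have hyy : ∀ j, y j = 0 := fun j => le_antisymm (ha ▸ heq ▸ (hy j).2) (ha ▸ (hy j).1)
    have hb : b = 0 := ha ▸ heq.symm
    simp [hyy, ha, hb]
  · have hba : 0 < b - a := by linarith
    set p : ℝ := -a / (b - a) with hp
    have hp0 : 0 ≤ p := div_nonneg (neg_nonneg.2 ha0) hba.le
    have hp1 : p ≤ 1 := by rw [div_le_one hba]; linarith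
    have chord : ∀ j : Fin n, Real.exp (t * y j) ≤
        (b - y j) / (b - a) * Real.exp (t * a) + (y j - a) / (b - a) * Real.exp (t * b) := by
      intro j
      have hl1 : 0 ≤ (b - y j) / (b - a) := div_nonneg (by linarith [(hy j).2]) hba.le
      have hl2 : 0 ≤ (y j - a) / (b - a) := div_nonneg (by linarith [(hy j).1]) hba.le
      have hls : (b - y j) / (b - a) + (y j - a) / (b - a) = 1 := by field_simp; ring
      have := convexOn_exp.2 (Set.mem_univ (t * a)) (Set.mem_univ (t * b)) hl1 hl2 hls
      simp only [smul_eq_mul] at this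
      have harg : (b - y j) / (b - a) * (t * a) + (y j - a) / (b - a) * (t * b) = t * y j := by
        field_simp
        ring
      rw [harg] at this
      exact this
    have hAB : Real.exp (t * a) * Real.exp (t * (b - a)) = Real.exp (t * b) := by
      rw [← Real.exp_add]; congr 1; ring
    calc ∑ j, Real.exp (t * y j)
        ≤ ∑ j : Fin n, ((b - y j) / (b - a) * Real.exp (t * a)
            + (y j - a) / (b - a) * Real.exp (t * b)) :=
          Finset.sum_le_sum fun j _ => chord j
      _ = ((n : ℝ) * b * Real.exp (t * a) + (-((n : ℝ) * a)) * Real.exp (t * b)) / (b - a) := by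
          rw [Finset.sum_add_distrib, ← Finset.sum_mul, ← Finset.sum_mul,
            ← Finset.sum_div, ← Finset.sum_div]
          have h1 : ∑ j, (b - y j) = (n : ℝ) * b := by
            rw [Finset.sum_sub_distrib, hsum]; simp [mul_comm]
          have h2 : ∑ j, (y j - a) = -((n : ℝ) * a) := by
            rw [Finset.sum_sub_distrib, hsum]; simp [mul_comm]
          rw [h1, h2]
          ring
      _ = (n : ℝ) * (Real.exp (-(p * (t * (b - a)))) * (1 - p + p * Real.exp (t * (b - a)))) := by
          have e1 : -(p * (t * (b - a))) = t * a := by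
            rw [hp]; field_simp
          rw [e1]
          have h1p : 1 - p = b / (b - a) := by rw [hp]; field_simp; ring
          calc ((n : ℝ) * b * Real.exp (t * a) + (-((n : ℝ) * a)) * Real.exp (t * b)) / (b - a)
              = (n : ℝ) * ((b / (b - a)) * Real.exp (t * a)
                  + (-a / (b - a)) * Real.exp (t * b)) := by ring
            _ = (n : ℝ) * (Real.exp (t * a) * (1 - p + p * Real.exp (t * (b - a)))) := by
                rw [h1p, ← hp, ← hAB]; ring
      _ ≤ (n : ℝ) * Real.exp ((t * (b - a)) ^ 2 / 8) :=
          mul_le_mul_of_nonneg_left (hmg_core p hp0 hp1 (t * (b - a))) hnpos.le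
      _ = (n : ℝ) * Real.exp (t ^ 2 * (b - a) ^ 2 / 8) := by rw [mul_pow]

lemma hmg_avg {n : ℕ} (hn : 0 < n) (x : Fin n → ℝ)
    (hx : ∀ j, x j ∈ Set.Icc (-1 : ℝ) 1) (t : ℝ) :
    ∑ j, Real.exp (t * (x j - (n : ℝ)⁻¹ * ∑ j, x j)) ≤ (n : ℝ) * Real.exp (t ^ 2 / 2) := by
  have hnne : (n : ℝ) ≠ 0 := by positivity
  set m : ℝ := (n : ℝ)⁻¹ * ∑ j, x j with hm
  have h := hmg_disc hn (fun j => x j - m) (-1 - m) (1 - m) t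
    (fun j => ⟨show -1 - m ≤ x j - m by linarith [(hx j).1],
      show x j - m ≤ 1 - m by linarith [(hx j).2]⟩)
    (by
      rw [Finset.sum_sub_distrib, Finset.sum_const, Finset.card_univ, Fintype.card_fin,
        nsmul_eq_mul, hm]
      field_simp
      ring)
  convert h using 3 <;> ring

lemma hmg_na {n : ℕ} (x : Fin n → ℝ) (g : Fin n → ℝ → ℝ)
    (hg0 : ∀ i y, 0 ≤ g i y) (hgm : ∀ i, Monotone (g i)) (s : Finset (Fin n)) :
    (n : ℝ) ^ s.card * ∑ π : Equiv.Perm (Fin n), ∏ i ∈ s, g i (x (π i)) ≤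
      (Fintype.card (Equiv.Perm (Fin n)) : ℝ) * ∏ i ∈ s, ∑ j, g i (x j) := by
  classical
  induction s using Finset.induction_on with
  | empty => simp [Finset.card_univ]
  | @insert a s ha IH =>
    set h : Fin n → ℝ := fun j =>
      ∑ π ∈ Finset.univ.filter (fun π : Equiv.Perm (Fin n) => π a = j),
        ∏ i ∈ s, g i (x (π i)) with hh
    have hfiber : ∀ (F : Equiv.Perm (Fin n) → ℝ),
        ∑ π : Equiv.Perm (Fin n), F π =
          ∑ j : Fin n, ∑ π ∈ Finset.univ.filter (fun π : Equiv.Perm (Fin n) => π a = j), F π :=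
      fun F => (Finset.sum_fiberwise Finset.univ (fun π : Equiv.Perm (Fin n) => π a) F).symm
    -- decompose insert sum
    have hdec : ∑ π : Equiv.Perm (Fin n), ∏ i ∈ insert a s, g i (x (π i)) =
        ∑ j : Fin n, g a (x j) * h j := by
      rw [hfiber]
      refine Finset.sum_congr rfl fun j _ => ?_
      rw [hh, Finset.mul_sum]
      refine Finset.sum_congr rfl fun π hπ => ?_
      have hπa : π a = j := (Finset.mem_filter.1 hπ).2
      rw [Finset.prod_insert ha, hπa]
    -- h is antitone w.r.t. x-order
    have hmono : ∀ j j' : Fin n, x j ≤ x j' → h j' ≤ h j := by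
      intro j j' hjj'
      rcases eq_or_ne j j' with rfl | hne
      · exact le_refl _
      have hswap : ∀ π : Equiv.Perm (Fin n), π ∈ Finset.univ.filter
          (fun π : Equiv.Perm (Fin n) => π a = j') →
          Equiv.swap j j' * π ∈ Finset.univ.filter (fun π : Equiv.Perm (Fin n) => π a = j) := by
        intro π hπ
        simp only [Finset.mem_filter, Finset.mem_univ, true_and] at hπ ⊢
        simp [Equiv.Perm.mul_apply, hπ, Equiv.swap_apply_right]
      have hswap' : ∀ π : Equiv.Perm (Fin n), π ∈ Finset.univ.filter
          (fun π : Equiv.Perm (Fin n) => π a = j) →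
          Equiv.swap j j' * π ∈ Finset.univ.filter (fun π : Equiv.Perm (Fin n) => π a = j') := by
        intro π hπ
        simp only [Finset.mem_filter, Finset.mem_univ, true_and] at hπ ⊢
        simp [Equiv.Perm.mul_apply, hπ, Equiv.swap_apply_left]
      have hinv : ∀ π : Equiv.Perm (Fin n), Equiv.swap j j' * (Equiv.swap j j' * π) = π := by
        intro π
        rw [← mul_assoc, Equiv.swap_mul_self, one_mul]
      have hre : h j' = ∑ π ∈ Finset.univ.filter (fun π : Equiv.Perm (Fin n) => π a = j),
          ∏ i ∈ s, g i (x ((Equiv.swap j j' * π) i)) := by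
        rw [hh]
        refine Finset.sum_bij' (fun π _ => Equiv.swap j j' * π) (fun π _ => Equiv.swap j j' * π)
          hswap hswap' (fun π _ => hinv π) (fun π _ => hinv π) ?_
        intro π hπ
        refine Finset.prod_congr rfl fun i hi => ?_
        rw [hinv]
      rw [hre, hh]
      refine Finset.sum_le_sum fun π hπ => ?_
      have hπa : π a = j := (Finset.mem_filter.1 hπ).2
      refine Finset.prod_le_prod (fun i _ => hg0 _ _) fun i hi => ?_
      refine hgm i ?_
      have hia : i ≠ a := fun hia => ha (hia ▸ hi)
      have hπij : π i ≠ j := fun hcon => hia (π.injective (hcon.trans hπa.symm))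
      simp only [Equiv.Perm.mul_apply]
      rcases eq_or_ne (π i) j' with hij' | hij'
      · rw [hij', Equiv.swap_apply_right]
        exact hjj'
      · rw [Equiv.swap_apply_of_ne_of_ne hπij hij']
    -- Chebyshev
    have hcheb : (n : ℝ) * ∑ j : Fin n, g a (x j) * h j ≤
        (∑ j : Fin n, g a (x j)) * ∑ j : Fin n, h j := by
      have hanti : Antivary (fun j : Fin n => g a (x j)) h := by
        intro i j hij
        rcases le_total (x i) (x j) with hx' | hx'
        · exact absurd hij (not_lt.2 (hmono i j hx'))
        · exact hgm a hx'
      have := hanti.card_mul_sum_le_sum_mul_sum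
      simpa using this
    have hsumh : ∑ j : Fin n, h j = ∑ π : Equiv.Perm (Fin n), ∏ i ∈ s, g i (x (π i)) :=
      (hfiber _).symm
    have hga_nonneg : 0 ≤ ∑ j : Fin n, g a (x j) :=
      Finset.sum_nonneg fun j _ => hg0 _ _
    have hpow_nonneg : (0 : ℝ) ≤ (n : ℝ) ^ s.card := by positivity
    calc (n : ℝ) ^ (insert a s).card * ∑ π : Equiv.Perm (Fin n), ∏ i ∈ insert a s, g i (x (π i))
        = (n : ℝ) ^ s.card * ((n : ℝ) * ∑ j : Fin n, g a (x j) * h j) := by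
          rw [hdec, Finset.card_insert_of_notMem ha, pow_succ]
          ring
      _ ≤ (n : ℝ) ^ s.card * ((∑ j : Fin n, g a (x j)) * ∑ j : Fin n, h j) :=
          mul_le_mul_of_nonneg_left hcheb hpow_nonneg
      _ = (∑ j : Fin n, g a (x j)) *
            ((n : ℝ) ^ s.card * ∑ π : Equiv.Perm (Fin n), ∏ i ∈ s, g i (x (π i))) := by
          rw [hsumh]; ring
      _ ≤ (∑ j : Fin n, g a (x j)) *
            ((Fintype.card (Equiv.Perm (Fin n)) : ℝ) * ∏ i ∈ s, ∑ j, g i (x j)) :=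
          mul_le_mul_of_nonneg_left IH hga_nonneg
      _ = (Fintype.card (Equiv.Perm (Fin n)) : ℝ) * ∏ i ∈ insert a s, ∑ j, g i (x j) := by
          rw [Finset.prod_insert ha]; ring

lemma hmg_perm {n : ℕ} (x : Fin n → ℝ) (hx : ∀ i, x i ∈ Set.Icc (-1 : ℝ) 1)
    (w : Fin n → ℝ) (hw : ∀ i, 0 ≤ w i) (l : ℝ) :
    ∑ π : Equiv.Perm (Fin n),
        Real.exp (l * ∑ i, w i * (x (π i) - (n : ℝ)⁻¹ * ∑ j, x j)) ≤
      (Fintype.card (Equiv.Perm (Fin n)) : ℝ) * Real.exp (l ^ 2 / 2 * ∑ i, w i ^ 2) := by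
  rcases Nat.eq_zero_or_pos n with rfl | hn
  · simp
  have hnpos : (0 : ℝ) < n := by exact_mod_cast hn
  set m : ℝ := (n : ℝ)⁻¹ * ∑ j, x j with hm
  obtain ⟨ε, hε1, hεl⟩ : ∃ ε : ℝ, ε * ε = 1 ∧ 0 ≤ l * ε := by
    rcases le_total 0 l with hl | hl
    · exact ⟨1, by norm_num, by simpa using hl⟩
    · exact ⟨-1, by norm_num, by simpa using neg_nonneg.2 hl⟩
  set g : Fin n → ℝ → ℝ := fun i y => Real.exp (l * ε * w i * (y - ε * m)) with hg
  have hg0 : ∀ i y, 0 ≤ g i y := fun i y => (Real.exp_pos _).le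
  have hgm : ∀ i, Monotone (g i) := by
    intro i y z hyz
    apply Real.exp_le_exp.2
    have h0 : 0 ≤ l * ε * w i := mul_nonneg hεl (hw i)
    nlinarith
  have hkey : ∀ π : Equiv.Perm (Fin n),
      Real.exp (l * ∑ i, w i * (x (π i) - m)) = ∏ i, g i ((fun k => ε * x k) (π i)) := by
    intro π
    rw [Finset.mul_sum, Real.exp_sum]
    refine Finset.prod_congr rfl fun i _ => ?_
    show Real.exp (l * (w i * (x (π i) - m))) = Real.exp (l * ε * w i * (ε * x (π i) - ε * m))
    congr 1
    linear_combination (-(l * (w i * (x (π i) - m)))) * hε1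
  have hfac : ∀ i : Fin n, ∑ j, g i (ε * x j) ≤ (n : ℝ) * Real.exp ((l * w i) ^ 2 / 2) := by
    intro i
    have heq : ∀ j : Fin n, g i (ε * x j) = Real.exp (l * w i * (x j - m)) := by
      intro j
      show Real.exp (l * ε * w i * (ε * x j - ε * m)) = Real.exp (l * w i * (x j - m))
      congr 1
      linear_combination (l * (w i * (x j - m))) * hε1
    have hAvg := hmg_avg hn x hx (l * w i)
    rw [← hm] at hAvg
    calc ∑ j, g i (ε * x j) = ∑ j, Real.exp (l * w i * (x j - m)) :=
          Finset.sum_congr rfl fun j _ => heq j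
      _ ≤ (n : ℝ) * Real.exp ((l * w i) ^ 2 / 2) := hAvg
  have hna := hmg_na (fun k => ε * x k) g hg0 hgm Finset.univ
  have hprod : ∏ i : Fin n, ∑ j, g i ((fun k => ε * x k) j) ≤
      (n : ℝ) ^ n * Real.exp (l ^ 2 / 2 * ∑ i, w i ^ 2) := by
    calc ∏ i : Fin n, ∑ j, g i ((fun k => ε * x k) j)
        ≤ ∏ i : Fin n, ((n : ℝ) * Real.exp ((l * w i) ^ 2 / 2)) :=
          Finset.prod_le_prod (fun i _ => Finset.sum_nonneg fun j _ => hg0 _ _)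
            (fun i _ => hfac i)
      _ = (n : ℝ) ^ n * Real.exp (l ^ 2 / 2 * ∑ i, w i ^ 2) := by
          rw [Finset.prod_mul_distrib, Finset.prod_const, Finset.card_univ, Fintype.card_fin,
            ← Real.exp_sum, Finset.mul_sum]
          rw [show (∑ i : Fin n, (l * w i) ^ 2 / 2) = ∑ i : Fin n, l ^ 2 / 2 * w i ^ 2 from
            Finset.sum_congr rfl fun i _ => by ring]
  have hcard : (Finset.univ : Finset (Fin n)).card = n := by simp
  rw [hcard] at hna
  have hmain : (n : ℝ) ^ n * ∑ π : Equiv.Perm (Fin n),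
      Real.exp (l * ∑ i, w i * (x (π i) - m)) ≤
      (n : ℝ) ^ n * ((Fintype.card (Equiv.Perm (Fin n)) : ℝ) *
        Real.exp (l ^ 2 / 2 * ∑ i, w i ^ 2)) := by
    calc (n : ℝ) ^ n * ∑ π : Equiv.Perm (Fin n), Real.exp (l * ∑ i, w i * (x (π i) - m))
        = (n : ℝ) ^ n * ∑ π : Equiv.Perm (Fin n), ∏ i, g i ((fun k => ε * x k) (π i)) := by
          congr 1
          exact Finset.sum_congr rfl fun π _ => hkey π
      _ ≤ (Fintype.card (Equiv.Perm (Fin n)) : ℝ) * ∏ i, ∑ j, g i ((fun k => ε * x k) j) := hna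
      _ ≤ (Fintype.card (Equiv.Perm (Fin n)) : ℝ) *
            ((n : ℝ) ^ n * Real.exp (l ^ 2 / 2 * ∑ i, w i ^ 2)) :=
          mul_le_mul_of_nonneg_left hprod (by positivity)
      _ = (n : ℝ) ^ n * ((Fintype.card (Equiv.Perm (Fin n)) : ℝ) *
            Real.exp (l ^ 2 / 2 * ∑ i, w i ^ 2)) := by ring
  exact le_of_mul_le_mul_left hmain (by positivity)

/-- Hoeffding-type MGF bound, with no inflation factor, for weighted sums of
exchangeable random variables in `[-1,1]` with nonnegative weights
(Theorem 4 of the paper). -/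
theorem hoeffding_mgf_exchangeable_nonneg {Ω : Type*} [MeasurableSpace Ω] (P : Measure Ω)
    [IsProbabilityMeasure P] (n : ℕ) (w : ℕ → ℝ) (hw : ∀ i < n, 0 ≤ w i)
    (X : ℕ → Ω → ℝ)
    (hmeas : ∀ i, Measurable (X i))
    (hbdd : ∀ i < n, ∀ ω, X i ω ∈ Set.Icc (-1 : ℝ) 1)
    (hexch : ∀ π : Equiv.Perm (Fin n),
      Measure.map (fun ω => fun i : Fin n => X (π i).val ω) P =
        Measure.map (fun ω => fun i : Fin n => X i.val ω) P)
    (l : ℝ) :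
    ∫ ω, Real.exp (l * ∑ i ∈ Finset.range n,
        w i * (X i ω - (n : ℝ)⁻¹ * ∑ j ∈ Finset.range n, X j ω)) ∂P ≤
      Real.exp (l ^ 2 / 2 * ∑ i ∈ Finset.range n, (w i) ^ 2) := by
  classical
  rcases Nat.eq_zero_or_pos n with rfl | hn
  · simp
  have hnpos : (0 : ℝ) < n := by exact_mod_cast hn
  set F : (Fin n → ℝ) → ℝ := fun y =>
    Real.exp (l * ∑ i : Fin n, w i.val * (y i - (n : ℝ)⁻¹ * ∑ j : Fin n, y j)) with hF
  have hFcont : Continuous F := by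
    apply Real.continuous_exp.comp
    apply continuous_const.mul
    refine continuous_finset_sum _ fun i _ => continuous_const.mul ?_
    exact (continuous_apply i).sub
      (continuous_const.mul (continuous_finset_sum _ fun j _ => continuous_apply j))
  have hYmeas : ∀ π : Equiv.Perm (Fin n),
      Measurable (fun ω => fun i : Fin n => X (π i).val ω) :=
    fun π => measurable_pi_lambda _ fun i => hmeas _
  have hYmeas1 : Measurable (fun ω => fun i : Fin n => X i.val ω) :=
    measurable_pi_lambda _ fun i => hmeas _
  have hrw : ∀ ω, Real.exp (l * ∑ i ∈ Finset.range n,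
      w i * (X i ω - (n : ℝ)⁻¹ * ∑ j ∈ Finset.range n, X j ω)) =
      F (fun i : Fin n => X i.val ω) := by
    intro ω
    show _ = Real.exp (l * ∑ i : Fin n,
      w i.val * (X i.val ω - (n : ℝ)⁻¹ * ∑ j : Fin n, X j.val ω))
    rw [Fin.sum_univ_eq_sum_range (fun j => X j ω) n,
      Fin.sum_univ_eq_sum_range
        (fun i => w i * (X i ω - (n : ℝ)⁻¹ * ∑ j ∈ Finset.range n, X j ω)) n]
  have hinteq : ∀ π : Equiv.Perm (Fin n),
      ∫ ω, F (fun i : Fin n => X (π i).val ω) ∂P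
        = ∫ ω, F (fun i : Fin n => X i.val ω) ∂P := by
    intro π
    rw [← integral_map (hYmeas π).aemeasurable hFcont.aestronglyMeasurable, hexch π,
      integral_map hYmeas1.aemeasurable hFcont.aestronglyMeasurable]
  set M : ℝ := Real.exp (|l| * ∑ i : Fin n, 2 * w i.val) with hM
  have hbound : ∀ π : Equiv.Perm (Fin n), ∀ ω,
      ‖F (fun i : Fin n => X (π i).val ω)‖ ≤ M := by
    intro π ω
    show ‖Real.exp (l * ∑ i : Fin n,
      w i.val * (X (π i).val ω - (n : ℝ)⁻¹ * ∑ j : Fin n, X (π j).val ω))‖ ≤ M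
    rw [Real.norm_eq_abs, Real.abs_exp, hM]
    apply Real.exp_le_exp.2
    have hm_abs : |(n : ℝ)⁻¹ * ∑ j : Fin n, X (π j).val ω| ≤ 1 := by
      rw [abs_mul, abs_inv, Nat.abs_cast]
      have h1 : |∑ j : Fin n, X (π j).val ω| ≤ (n : ℝ) := by
        refine (Finset.abs_sum_le_sum_abs _ _).trans ?_
        calc ∑ j : Fin n, |X (π j).val ω| ≤ ∑ _j : Fin n, (1 : ℝ) :=
              Finset.sum_le_sum fun j _ => abs_le.2
                ⟨(hbdd (π j).val (π j).isLt ω).1, (hbdd (π j).val (π j).isLt ω).2⟩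
          _ = (n : ℝ) := by simp
      calc (n : ℝ)⁻¹ * |∑ j : Fin n, X (π j).val ω| ≤ (n : ℝ)⁻¹ * (n : ℝ) :=
            mul_le_mul_of_nonneg_left h1 (by positivity)
        _ = 1 := by field_simp
    have hterm : ∀ i : Fin n,
        |w i.val * (X (π i).val ω - (n : ℝ)⁻¹ * ∑ j : Fin n, X (π j).val ω)| ≤ 2 * w i.val := by
      intro i
      rw [abs_mul, abs_of_nonneg (hw i.val i.isLt)]
      have hxi : |X (π i).val ω| ≤ 1 := abs_le.2
        ⟨(hbdd (π i).val (π i).isLt ω).1, (hbdd (π i).val (π i).isLt ω).2⟩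
      have : |X (π i).val ω - (n : ℝ)⁻¹ * ∑ j : Fin n, X (π j).val ω| ≤ 2 := by
        calc _ ≤ |X (π i).val ω| + |(n : ℝ)⁻¹ * ∑ j : Fin n, X (π j).val ω| := abs_sub _ _
          _ ≤ 2 := by linarith
      calc w i.val * |X (π i).val ω - (n : ℝ)⁻¹ * ∑ j : Fin n, X (π j).val ω|
          ≤ w i.val * 2 := mul_le_mul_of_nonneg_left this (hw i.val i.isLt)
        _ = 2 * w i.val := mul_comm _ _
    calc l * ∑ i : Fin n, w i.val * (X (π i).val ω - (n : ℝ)⁻¹ * ∑ j : Fin n, X (π j).val ω)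
        ≤ |l * ∑ i : Fin n, w i.val *
            (X (π i).val ω - (n : ℝ)⁻¹ * ∑ j : Fin n, X (π j).val ω)| := le_abs_self _
      _ = |l| * |∑ i : Fin n, w i.val *
            (X (π i).val ω - (n : ℝ)⁻¹ * ∑ j : Fin n, X (π j).val ω)| := abs_mul _ _
      _ ≤ |l| * ∑ i : Fin n, |w i.val *
            (X (π i).val ω - (n : ℝ)⁻¹ * ∑ j : Fin n, X (π j).val ω)| :=
          mul_le_mul_of_nonneg_left (Finset.abs_sum_le_sum_abs _ _) (abs_nonneg l)
      _ ≤ |l| * ∑ i : Fin n, 2 * w i.val :=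
          mul_le_mul_of_nonneg_left (Finset.sum_le_sum fun i _ => hterm i) (abs_nonneg l)
  have hint : ∀ π : Equiv.Perm (Fin n),
      Integrable (fun ω => F (fun i : Fin n => X (π i).val ω)) P := fun π =>
    (integrable_const M).mono' ((hFcont.measurable.comp (hYmeas π)).aestronglyMeasurable)
      (Filter.Eventually.of_forall (hbound π))
  set N : ℝ := (Fintype.card (Equiv.Perm (Fin n)) : ℝ) with hN
  have hNpos : 0 < N := by
    rw [hN]
    exact_mod_cast Fintype.card_pos
  have pointwise : ∀ ω, ∑ π : Equiv.Perm (Fin n), F (fun i : Fin n => X (π i).val ω) ≤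
      N * Real.exp (l ^ 2 / 2 * ∑ i ∈ Finset.range n, w i ^ 2) := by
    intro ω
    have hx : ∀ i : Fin n, X i.val ω ∈ Set.Icc (-1 : ℝ) 1 := fun i => hbdd i.val i.isLt ω
    have h := hmg_perm (fun i : Fin n => X i.val ω) hx (fun i : Fin n => w i.val)
      (fun i => hw i.val i.isLt) l
    rw [← Fin.sum_univ_eq_sum_range (fun i => w i ^ 2) n]
    refine le_trans (le_of_eq (Finset.sum_congr rfl fun π _ => ?_)) h
    show Real.exp (l * ∑ i : Fin n,
        w i.val * (X (π i).val ω - (n : ℝ)⁻¹ * ∑ j : Fin n, X (π j).val ω)) = _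
    rw [show (∑ j : Fin n, X (π j).val ω) = ∑ j : Fin n, X j.val ω from
      Equiv.sum_comp π (fun j => X j.val ω)]
  calc ∫ ω, Real.exp (l * ∑ i ∈ Finset.range n,
        w i * (X i ω - (n : ℝ)⁻¹ * ∑ j ∈ Finset.range n, X j ω)) ∂P
      = ∫ ω, F (fun i : Fin n => X i.val ω) ∂P := by
        exact integral_congr_ae (Filter.Eventually.of_forall fun ω => hrw ω)
    _ = N⁻¹ * ∑ π : Equiv.Perm (Fin n), ∫ ω, F (fun i : Fin n => X (π i).val ω) ∂P := by
        rw [Finset.sum_congr rfl fun π _ => hinteq π, Finset.sum_const, Finset.card_univ,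
          nsmul_eq_mul, ← hN, ← mul_assoc, inv_mul_cancel₀ hNpos.ne', one_mul]
    _ = ∫ ω, N⁻¹ * ∑ π : Equiv.Perm (Fin n), F (fun i : Fin n => X (π i).val ω) ∂P := by
        rw [← integral_finset_sum _ fun π _ => hint π, ← integral_const_mul]
    _ ≤ ∫ _ω, Real.exp (l ^ 2 / 2 * ∑ i ∈ Finset.range n, w i ^ 2) ∂P := by
        refine integral_mono ((integrable_finset_sum _ fun π _ => hint π).const_mul _)
          (integrable_const _) fun ω => ?_
        have h := pointwise ω
        calc N⁻¹ * ∑ π : Equiv.Perm (Fin n), F (fun i : Fin n => X (π i).val ω)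
            ≤ N⁻¹ * (N * Real.exp (l ^ 2 / 2 * ∑ i ∈ Finset.range n, w i ^ 2)) :=
              mul_le_mul_of_nonneg_left h (by positivity)
          _ = Real.exp (l ^ 2 / 2 * ∑ i ∈ Finset.range n, w i ^ 2) := by
              rw [← mul_assoc, inv_mul_cancel₀ hNpos.ne', one_mul]
    _ = Real.exp (l ^ 2 / 2 * ∑ i ∈ Finset.range n, w i ^ 2) := by simp
end

section
/- Fix $n \ge 1$ and $v \in \mathbb{R}^n$, and let $X_1,\dots,X_n \in [-1,1]$ be exchangeable. Fix $\lambda \in \mathbb{R}$, set $M_0 = 1$ and for $k \in [n]$ define $M_k = \exp\{\lambda \sum_{i=1}^k v_i (X_i - \bar{X}_{\ge i}) - \frac{\lambda^2}{2}\sum_{i=1}^k v_i^2\}$, where $\bar{X}_{\ge i} = \frac{1}{n-i+1}\sum_{j=i}^n X_j$. Then $(M_k)_{k=0}^n$ is a supermartingale with respect to the filtration generated by $\bar{X}, X_1, \dots, X_k$; in particular $\mathbb{E}[M_n] \le 1$. -/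
open MeasureTheory

section Aux

private lemma wsr_g_pos (μ t : ℝ) (hμ : |μ| ≤ 1) : 0 < Real.cosh t + μ * Real.sinh t := by
  have h1 := Real.cosh_pos t
  have h2 : Real.cosh t ^ 2 = Real.sinh t ^ 2 + 1 := Real.cosh_sq t
  have h3 : |μ * Real.sinh t| ≤ |Real.sinh t| := by
    rw [abs_mul]; exact mul_le_of_le_one_left (abs_nonneg _) hμ
  have h4 : |Real.sinh t| < Real.cosh t := by
    nlinarith [abs_nonneg (Real.sinh t), sq_abs (Real.sinh t)]
  have := neg_abs_le (μ * Real.sinh t)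
  linarith

private lemma wsr_w_hasDeriv (μ : ℝ) (hμ : |μ| ≤ 1) (t : ℝ) :
    HasDerivAt (fun t => μ + t - (Real.sinh t + μ * Real.cosh t) / (Real.cosh t + μ * Real.sinh t))
      (((Real.sinh t + μ * Real.cosh t) / (Real.cosh t + μ * Real.sinh t))^2) t := by
  have hg := wsr_g_pos μ t hμ
  have h1 : HasDerivAt (fun t => Real.sinh t + μ * Real.cosh t)
      (Real.cosh t + μ * Real.sinh t) t := by
    exact (Real.hasDerivAt_sinh t).add ((Real.hasDerivAt_cosh t).const_mul μ)
  have h2 : HasDerivAt (fun t => Real.cosh t + μ * Real.sinh t)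
      (Real.sinh t + μ * Real.cosh t) t := by
    exact (Real.hasDerivAt_cosh t).add ((Real.hasDerivAt_sinh t).const_mul μ)
  have h3 := h1.div h2 hg.ne'
  have h4 := ((hasDerivAt_id t).const_add μ).sub h3
  refine h4.congr_deriv ?_
  rw [eq_comm, div_pow, eq_sub_iff_add_eq, ← add_div, div_eq_one_iff_eq (pow_ne_zero 2 hg.ne')]
  ring

private lemma wsr_w_mono (μ : ℝ) (hμ : |μ| ≤ 1) :
    Monotone (fun t => μ + t -
      (Real.sinh t + μ * Real.cosh t) / (Real.cosh t + μ * Real.sinh t)) := by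
  apply monotone_of_deriv_nonneg
  · exact fun x => (wsr_w_hasDeriv μ hμ x).differentiableAt
  · intro x
    rw [(wsr_w_hasDeriv μ hμ x).deriv]
    positivity

private lemma wsr_u_hasDeriv (μ : ℝ) (hμ : |μ| ≤ 1) (t : ℝ) :
    HasDerivAt (fun t => μ * t + t^2/2 - Real.log (Real.cosh t + μ * Real.sinh t))
      (μ + t - (Real.sinh t + μ * Real.cosh t) / (Real.cosh t + μ * Real.sinh t)) t := by
  have hg := wsr_g_pos μ t hμ
  have h2 : HasDerivAt (fun t => Real.cosh t + μ * Real.sinh t)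
      (Real.sinh t + μ * Real.cosh t) t := by
    exact (Real.hasDerivAt_cosh t).add ((Real.hasDerivAt_sinh t).const_mul μ)
  have h3 : HasDerivAt (fun t => Real.log (Real.cosh t + μ * Real.sinh t))
      ((Real.sinh t + μ * Real.cosh t) / (Real.cosh t + μ * Real.sinh t)) t := by
    refine ((Real.hasDerivAt_log hg.ne').comp t h2).congr_deriv ?_
    ring
  have h4 : HasDerivAt (fun t : ℝ => μ * t + t^2/2) (μ + t) t := by
    have := ((hasDerivAt_id t).const_mul μ).add ((hasDerivAt_pow 2 t).div_const 2)
    refine this.congr_deriv ?_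
    norm_num
  exact h4.sub h3

/-- Hoeffding's two-point mgf bound. -/
private lemma wsr_key_ineq (μ t : ℝ) (hμ : |μ| ≤ 1) :
    Real.cosh t + μ * Real.sinh t ≤ Real.exp (μ * t + t^2/2) := by
  have hg := wsr_g_pos μ t hμ
  rw [← Real.exp_log hg, Real.exp_le_exp, ← sub_nonneg]
  have hw0 : μ + (0:ℝ) - (Real.sinh 0 + μ * Real.cosh 0) / (Real.cosh 0 + μ * Real.sinh 0)
      = 0 := by simp
  have hdiff : ∀ x : ℝ, DifferentiableAt ℝ
      (fun t => μ * t + t^2/2 - Real.log (Real.cosh t + μ * Real.sinh t)) x :=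
    fun x => (wsr_u_hasDeriv μ hμ x).differentiableAt
  have hu0 : μ * (0:ℝ) + (0:ℝ)^2/2 - Real.log (Real.cosh 0 + μ * Real.sinh 0) = 0 := by simp
  rcases le_total 0 t with ht | ht
  · have hmono : MonotoneOn (fun t => μ * t + t^2/2 -
        Real.log (Real.cosh t + μ * Real.sinh t)) (Set.Ici 0) := by
      apply monotoneOn_of_deriv_nonneg (convex_Ici 0)
        (Differentiable.continuous (fun x => hdiff x)).continuousOn
        (fun x _ => (hdiff x).differentiableWithinAt)
      intro x hx
      rw [interior_Ici] at hx
      rw [(wsr_u_hasDeriv μ hμ x).deriv]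
      have := wsr_w_mono μ hμ hx.le
      simpa using this
    have := hmono Set.self_mem_Ici (Set.mem_Ici.2 ht) ht
    simpa using this
  · have hanti : AntitoneOn (fun t => μ * t + t^2/2 -
        Real.log (Real.cosh t + μ * Real.sinh t)) (Set.Iic 0) := by
      apply antitoneOn_of_deriv_nonpos (convex_Iic 0)
        (Differentiable.continuous (fun x => hdiff x)).continuousOn
        (fun x _ => (hdiff x).differentiableWithinAt)
      intro x hx
      rw [interior_Iic] at hx
      rw [(wsr_u_hasDeriv μ hμ x).deriv]
      have := wsr_w_mono μ hμ hx.le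
      simpa using this
    have := hanti (Set.mem_Iic.2 ht) Set.self_mem_Iic ht
    simpa using this

/-- Chord (convexity) bound for the exponential on `[-1, 1]`. -/
private lemma wsr_chord (x t : ℝ) (hx : |x| ≤ 1) :
    Real.exp (t * x) ≤ Real.cosh t + x * Real.sinh t := by
  obtain ⟨hx1, hx2⟩ := abs_le.1 hx
  have h1 : (0:ℝ) ≤ (1 - x)/2 := by linarith
  have h2 : (0:ℝ) ≤ (1 + x)/2 := by linarith
  have h3 : (1 - x)/2 + (1 + x)/2 = 1 := by ring
  have hcvx := convexOn_exp.2 (Set.mem_univ (-t)) (Set.mem_univ t) h1 h2 h3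
  rw [smul_eq_mul, smul_eq_mul, smul_eq_mul, smul_eq_mul] at hcvx
  have harg : (1 - x)/2 * (-t) + (1 + x)/2 * t = t * x := by ring
  rw [harg] at hcvx
  rw [Real.cosh_eq, Real.sinh_eq]
  linarith

end Aux

/-- The Hoeffding-type supermartingale of Waudby-Smith and Ramdas for exchangeable
sequences (Proposition 1 of the paper): with `M_k = exp(λ ∑_{i≤k} v_i (X_i - X̄_{≥i})
- (λ²/2) ∑_{i≤k} v_i²)`, the process `(M_k)_{k=0}^n` is a supermartingale with respect
to the filtration generated by `X̄, X_1, …, X_k`, and in particular `E[M_n] ≤ 1`. -/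
theorem hoeffding_supermartingale_exchangeable {Ω : Type*} {m : MeasurableSpace Ω}
    (P : Measure Ω) [IsProbabilityMeasure P] (n : ℕ) (hn : 1 ≤ n) (v : ℕ → ℝ)
    (X : ℕ → Ω → ℝ)
    (hmeas : ∀ i, Measurable (X i))
    (hbdd : ∀ i < n, ∀ ω, X i ω ∈ Set.Icc (-1 : ℝ) 1)
    (hexch : ∀ π : Equiv.Perm (Fin n),
      Measure.map (fun ω => fun i : Fin n => X (π i).val ω) P =
        Measure.map (fun ω => fun i : Fin n => X i.val ω) P)
    (l : ℝ) (M : ℕ → Ω → ℝ)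
    (hM : ∀ k ω, M k ω = Real.exp (l * ∑ i ∈ Finset.range (min k n),
        v i * (X i ω - ((n : ℝ) - i)⁻¹ * ∑ j ∈ Finset.Ico i n, X j ω) -
      l ^ 2 / 2 * ∑ i ∈ Finset.range (min k n), (v i) ^ 2))
    (ℱ : Filtration ℕ m)
    (hℱ : ∀ k, ℱ k =
      MeasurableSpace.comap (fun ω => (n : ℝ)⁻¹ * ∑ j ∈ Finset.range n, X j ω)
          inferInstance ⊔
        ⨆ i ∈ Finset.range (min k n), MeasurableSpace.comap (X i) inferInstance) :
    Supermartingale M ℱ P ∧ ∫ ω, M n ω ∂P ≤ 1 := by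
  classical
  have hbound1 : ∀ i, i < n → ∀ ω, |X i ω| ≤ 1 := fun i hi ω =>
    abs_le.2 ⟨(hbdd i hi ω).1, (hbdd i hi ω).2⟩
  -- bound on the running averages
  have hmubd : ∀ i, i < n → ∀ ω,
      |((n : ℝ) - i)⁻¹ * ∑ j ∈ Finset.Ico i n, X j ω| ≤ 1 := by
    intro i hi ω
    have hcast : ((n : ℝ) - i) = ((n - i : ℕ) : ℝ) := by
      push_cast [Nat.cast_sub hi.le]; ring
    have hpos : (0:ℝ) < (n : ℝ) - i := by
      rw [hcast]
      exact_mod_cast Nat.sub_pos_of_lt hi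
    have habs : |∑ j ∈ Finset.Ico i n, X j ω| ≤ ((n : ℝ) - i) := by
      calc |∑ j ∈ Finset.Ico i n, X j ω| ≤ ∑ j ∈ Finset.Ico i n, |X j ω| :=
            Finset.abs_sum_le_sum_abs _ _
        _ ≤ ∑ _j ∈ Finset.Ico i n, (1:ℝ) :=
            Finset.sum_le_sum fun j hj => hbound1 j (Finset.mem_Ico.1 hj).2 ω
        _ = ((n - i : ℕ) : ℝ) := by rw [Finset.sum_const, Nat.card_Ico]; simp
        _ = (n : ℝ) - i := hcast.symm
    rw [abs_mul, abs_inv, abs_of_pos hpos, inv_mul_le_iff₀ hpos, mul_one]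
    exact habs
  -- integrability of bounded measurable functions
  have hbint : ∀ (f : Ω → ℝ) (c : ℝ), Measurable f → (∀ ω, |f ω| ≤ c) → Integrable f P :=
    fun f c hf hc => ⟨hf.aestronglyMeasurable,
      HasFiniteIntegral.of_bounded (C := c) (ae_of_all _ fun ω => by
        rw [Real.norm_eq_abs]; exact hc ω)⟩
  -- measurability with respect to the filtration
  have hYF : ∀ k, Measurable[ℱ k] (fun ω => (n : ℝ)⁻¹ * ∑ j ∈ Finset.range n, X j ω) := by
    intro k
    rw [measurable_iff_comap_le, hℱ k]
    exact le_sup_left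
  have hXF : ∀ k i, i < min k n → Measurable[ℱ k] (X i) := by
    intro k i hi
    rw [measurable_iff_comap_le, hℱ k]
    exact le_sup_of_le_right
      (le_iSup₂ (f := fun i (_ : i ∈ Finset.range (min k n)) =>
        MeasurableSpace.comap (X i) inferInstance) i (Finset.mem_range.2 hi))
  have hSF : ∀ k i, i ≤ min k n → Measurable[ℱ k] (fun ω => ∑ j ∈ Finset.Ico i n, X j ω) := by
    intro k i hi
    have hin : i ≤ n := le_trans hi (min_le_right _ _)
    have heq : (fun ω => ∑ j ∈ Finset.Ico i n, X j ω)
        = fun ω => (n:ℝ) * ((n : ℝ)⁻¹ * ∑ j ∈ Finset.range n, X j ω)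
            - ∑ j ∈ Finset.range i, X j ω := by
      funext ω
      rw [Finset.sum_Ico_eq_sub _ hin]
      have hne : (n:ℝ) ≠ 0 := by positivity
      field_simp
    rw [heq]
    exact ((hYF k).const_mul _).sub
      (Finset.measurable_sum _ fun j hj => hXF k j (lt_of_lt_of_le (Finset.mem_range.1 hj) hi))
  have hmuF : ∀ k i, i ≤ min k n →
      Measurable[ℱ k] (fun ω => ((n : ℝ) - i)⁻¹ * ∑ j ∈ Finset.Ico i n, X j ω) :=
    fun k i hi => (hSF k i hi).const_mul _
  have hMF : ∀ k, Measurable[ℱ k] (M k) := by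
    intro k
    have hMk : M k = fun ω => Real.exp (l * ∑ i ∈ Finset.range (min k n),
        v i * (X i ω - ((n : ℝ) - i)⁻¹ * ∑ j ∈ Finset.Ico i n, X j ω) -
      l ^ 2 / 2 * ∑ i ∈ Finset.range (min k n), (v i) ^ 2) := funext (hM k)
    rw [hMk]
    apply Measurable.exp
    apply Measurable.sub _ measurable_const
    apply Measurable.const_mul
    apply Finset.measurable_sum
    intro i hi
    have hi' := Finset.mem_range.1 hi
    exact ((hXF k i hi').sub (hmuF k i hi'.le)).const_mul (v i)
  have hadp : StronglyAdapted ℱ M := fun k => (hMF k).stronglyMeasurable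
  have hMm : ∀ k, Measurable (M k) := fun k => (hMF k).mono (ℱ.le k) le_rfl
  -- uniform bound on M
  have hM0 : ∀ k ω, 0 ≤ M k ω := fun k ω => by rw [hM]; exact (Real.exp_pos _).le
  have hMbd : ∀ k ω, M k ω ≤ Real.exp (|l| * ∑ i ∈ Finset.range n, |v i| * 2) := by
    intro k ω
    rw [hM, Real.exp_le_exp]
    have h2 : (0:ℝ) ≤ l ^ 2 / 2 * ∑ i ∈ Finset.range (min k n), (v i) ^ 2 := by positivity
    have h1 : l * ∑ i ∈ Finset.range (min k n),
        v i * (X i ω - ((n : ℝ) - i)⁻¹ * ∑ j ∈ Finset.Ico i n, X j ω)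
        ≤ |l| * ∑ i ∈ Finset.range n, |v i| * 2 := by
      calc l * ∑ i ∈ Finset.range (min k n),
            v i * (X i ω - ((n : ℝ) - i)⁻¹ * ∑ j ∈ Finset.Ico i n, X j ω)
          ≤ |l * ∑ i ∈ Finset.range (min k n),
            v i * (X i ω - ((n : ℝ) - i)⁻¹ * ∑ j ∈ Finset.Ico i n, X j ω)| := le_abs_self _
        _ = |l| * |∑ i ∈ Finset.range (min k n),
            v i * (X i ω - ((n : ℝ) - i)⁻¹ * ∑ j ∈ Finset.Ico i n, X j ω)| := abs_mul _ _
        _ ≤ |l| * ∑ i ∈ Finset.range (min k n),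
            |v i * (X i ω - ((n : ℝ) - i)⁻¹ * ∑ j ∈ Finset.Ico i n, X j ω)| :=
            mul_le_mul_of_nonneg_left (Finset.abs_sum_le_sum_abs _ _) (abs_nonneg l)
        _ ≤ |l| * ∑ i ∈ Finset.range (min k n), |v i| * 2 := by
            apply mul_le_mul_of_nonneg_left _ (abs_nonneg l)
            apply Finset.sum_le_sum
            intro i hi
            have hi' : i < n := lt_of_lt_of_le (Finset.mem_range.1 hi) (min_le_right _ _)
            rw [abs_mul]
            apply mul_le_mul_of_nonneg_left _ (abs_nonneg (v i))
            calc |X i ω - ((n : ℝ) - i)⁻¹ * ∑ j ∈ Finset.Ico i n, X j ω|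
                ≤ |X i ω| + |((n : ℝ) - i)⁻¹ * ∑ j ∈ Finset.Ico i n, X j ω| := abs_sub _ _
              _ ≤ 1 + 1 := add_le_add (hbound1 i hi' ω) (hmubd i hi' ω)
              _ = 2 := by norm_num
        _ ≤ |l| * ∑ i ∈ Finset.range n, |v i| * 2 := by
            apply mul_le_mul_of_nonneg_left _ (abs_nonneg l)
            apply Finset.sum_le_sum_of_subset_of_nonneg
              (Finset.range_subset_range.2 (min_le_right _ _))
            intro i _ _
            positivity
    linarith
  have hMint : ∀ k, Integrable (M k) P := fun k =>
    hbint _ _ (hMm k) (fun ω => by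
      rw [abs_of_nonneg (hM0 k ω)]; exact hMbd k ω)
  -- the conditional expectation identity, from exchangeability
  have hcond : ∀ k, k < n → (P[X k | ℱ k]) =ᵐ[P]
      fun ω => ((n : ℝ) - k)⁻¹ * ∑ j ∈ Finset.Ico k n, X j ω := by
    intro k hk
    have hkmin : k ≤ min k n := le_min le_rfl hk.le
    have hXkint : Integrable (X k) P := hbint _ 1 (hmeas k) (fun ω => hbound1 k hk ω)
    -- set-integral swap identity
    have hswap : ∀ (A : Set Ω), MeasurableSet[ℱ k] A → ∀ j, k ≤ j → j < n →
        ∫ ω in A, X j ω ∂P = ∫ ω in A, X k ω ∂P := by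
      intro A hA j hkj hjn
      have hAm : MeasurableSet A := (ℱ.le k) A hA
      -- the generating map
      set T : Ω → ℝ × (Fin k → ℝ) :=
        fun ω => ((n : ℝ)⁻¹ * ∑ j ∈ Finset.range n, X j ω, fun i => X i.val ω) with hT
      have hTmeas : Measurable[MeasurableSpace.comap T inferInstance] T :=
        fun s hs => ⟨s, hs, rfl⟩
      have hle : ℱ k ≤ MeasurableSpace.comap T inferInstance := by
        rw [hℱ k]
        apply sup_le
        · exact measurable_iff_comap_le.1 (measurable_fst.comp hTmeas)
        · refine iSup₂_le fun i hi => ?_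
          have hik : i < k := by
            have := Finset.mem_range.1 hi; omega
          exact measurable_iff_comap_le.1
            ((measurable_pi_apply (⟨i, hik⟩ : Fin k)).comp (measurable_snd.comp hTmeas))
      obtain ⟨B, hB, hBA⟩ := hle A hA
      set π : Equiv.Perm (Fin n) := Equiv.swap ⟨k, hk⟩ ⟨j, hjn⟩ with hπ
      set τ : (Fin n → ℝ) → ℝ × (Fin k → ℝ) :=
        fun w => ((n : ℝ)⁻¹ * ∑ i : Fin n, w i,
          fun i : Fin k => w ⟨i.val, lt_trans i.2 hk⟩) with hτ
      have hτmeas : Measurable τ := by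
        apply Measurable.prod
        · exact (Finset.measurable_sum Finset.univ fun i _ =>
            measurable_pi_apply i).const_mul _
        · exact measurable_pi_lambda _ fun i => measurable_pi_apply _
      set f : (Fin n → ℝ) → ℝ :=
        fun w => w ⟨j, hjn⟩ * Set.indicator B (fun _ => (1:ℝ)) (τ w) with hf
      have hfmeas : Measurable f :=
        (measurable_pi_apply _).mul ((measurable_const.indicator hB).comp hτmeas)
      have hτV : ∀ ω, τ (fun i : Fin n => X i.val ω) = T ω := by
        intro ω
        refine Prod.ext ?_ rfl
        show (n : ℝ)⁻¹ * ∑ i : Fin n, X i.val ω = (n : ℝ)⁻¹ * ∑ j ∈ Finset.range n, X j ω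
        rw [Fin.sum_univ_eq_sum_range (fun i => X i ω) n]
      have hτVπ : ∀ ω, τ (fun i : Fin n => X (π i).val ω) = T ω := by
        intro ω
        rw [← hτV ω]
        refine Prod.ext ?_ ?_
        · show (n : ℝ)⁻¹ * ∑ i : Fin n, X (π i).val ω
            = (n : ℝ)⁻¹ * ∑ i : Fin n, X i.val ω
          rw [Equiv.sum_comp π (fun i : Fin n => X i.val ω)]
        · funext i
          show X (π ⟨i.val, lt_trans i.2 hk⟩).val ω = X i.val ω
          have h1 : (⟨i.val, lt_trans i.2 hk⟩ : Fin n) ≠ ⟨k, hk⟩ := by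
            simp only [ne_eq, Fin.mk.injEq]
            omega
          have h2 : (⟨i.val, lt_trans i.2 hk⟩ : Fin n) ≠ ⟨j, hjn⟩ := by
            simp only [ne_eq, Fin.mk.injEq]
            omega
          rw [hπ, Equiv.swap_apply_of_ne_of_ne h1 h2]
      have hind : ∀ ω, Set.indicator B (fun _ => (1:ℝ)) (T ω)
          = Set.indicator A (fun _ => (1:ℝ)) ω := by
        intro ω
        rw [← hBA]
        by_cases h : T ω ∈ B <;> simp [Set.indicator_apply, h]
      have hVmeas : Measurable (fun ω => fun i : Fin n => X i.val ω) :=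
        measurable_pi_lambda _ fun i => hmeas _
      have hVπmeas : Measurable (fun ω => fun i : Fin n => X (π i).val ω) :=
        measurable_pi_lambda _ fun i => hmeas _
      have e1 : ∫ ω, f (fun i : Fin n => X i.val ω) ∂P
          = ∫ ω, f (fun i : Fin n => X (π i).val ω) ∂P := by
        rw [← integral_map hVmeas.aemeasurable hfmeas.aestronglyMeasurable,
            ← integral_map hVπmeas.aemeasurable hfmeas.aestronglyMeasurable, hexch π]
      have e2 : ∀ (g : Ω → ℝ),
          ∫ ω, g ω * Set.indicator A (fun _ => (1:ℝ)) ω ∂P = ∫ ω in A, g ω ∂P := by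
        intro g
        rw [← integral_indicator hAm]
        congr 1
        funext ω
        by_cases h : ω ∈ A <;> simp [Set.indicator_apply, h]
      have e3 : ∀ ω, f (fun i : Fin n => X i.val ω)
          = X j ω * Set.indicator A (fun _ => (1:ℝ)) ω := by
        intro ω
        show X j ω * Set.indicator B (fun _ => (1:ℝ)) (τ (fun i : Fin n => X i.val ω))
          = X j ω * Set.indicator A (fun _ => (1:ℝ)) ω
        rw [hτV ω, hind ω]
      have e4 : ∀ ω, f (fun i : Fin n => X (π i).val ω)
          = X k ω * Set.indicator A (fun _ => (1:ℝ)) ω := by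
        intro ω
        show X (π ⟨j, hjn⟩).val ω *
            Set.indicator B (fun _ => (1:ℝ)) (τ (fun i : Fin n => X (π i).val ω))
          = X k ω * Set.indicator A (fun _ => (1:ℝ)) ω
        rw [hτVπ ω, hind ω, hπ, Equiv.swap_apply_right]
      calc ∫ ω in A, X j ω ∂P
          = ∫ ω, X j ω * Set.indicator A (fun _ => (1:ℝ)) ω ∂P := (e2 (X j)).symm
        _ = ∫ ω, f (fun i : Fin n => X i.val ω) ∂P := by
            congr 1; funext ω; rw [e3 ω]
        _ = ∫ ω, f (fun i : Fin n => X (π i).val ω) ∂P := e1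
        _ = ∫ ω, X k ω * Set.indicator A (fun _ => (1:ℝ)) ω ∂P := by
            congr 1; funext ω; rw [e4 ω]
        _ = ∫ ω in A, X k ω ∂P := e2 (X k)
    -- characterize the conditional expectation
    refine (ae_eq_condExp_of_forall_setIntegral_eq (ℱ.le k) hXkint ?_ ?_ ?_).symm
    · intro s _ _
      exact (hbint _ 1 ((hmuF k k hkmin).mono (ℱ.le k) le_rfl)
        (fun ω => hmubd k hk ω)).integrableOn
    · intro A hA _
      have hint' : ∀ j ∈ Finset.Ico k n, Integrable (fun ω => X j ω) (P.restrict A) :=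
        fun j hj => (hbint _ 1 (hmeas j)
          (fun ω => hbound1 j (Finset.mem_Ico.1 hj).2 ω)).integrableOn
      rw [integral_const_mul, integral_finset_sum _ hint',
        Finset.sum_congr rfl (fun j hj =>
          hswap A hA j (Finset.mem_Ico.1 hj).1 (Finset.mem_Ico.1 hj).2),
        Finset.sum_const, Nat.card_Ico, nsmul_eq_mul, ← mul_assoc]
      have hcast : ((n : ℝ) - k) = ((n - k : ℕ) : ℝ) := by
        push_cast [Nat.cast_sub hk.le]; ring
      have hne : ((n - k : ℕ) : ℝ) ≠ 0 := by
        have := Nat.sub_pos_of_lt hk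
        positivity
      rw [hcast, inv_mul_cancel₀ hne, one_mul]
    · exact ((hmuF k k hkmin).stronglyMeasurable).aestronglyMeasurable
  -- one-step supermartingale property
  have hstep : ∀ k, (P[M (k+1) | ℱ k]) ≤ᵐ[P] M k := by
    intro k
    by_cases hk : k < n
    · -- main case
      have hkmin : k ≤ min k n := le_min le_rfl hk.le
      set s : ℝ := l * v k with hs
      set μk : Ω → ℝ := fun ω => ((n : ℝ) - k)⁻¹ * ∑ j ∈ Finset.Ico k n, X j ω with hμk
      set G : Ω → ℝ := fun ω => M k ω * Real.exp (-(s * μk ω) - s^2/2) with hG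
      have hμkbd : ∀ ω, |μk ω| ≤ 1 := fun ω => hmubd k hk ω
      have hμkF : Measurable[ℱ k] μk := hmuF k k hkmin
      have hμkm : Measurable μk := hμkF.mono (ℱ.le k) le_rfl
      have hGF : Measurable[ℱ k] G :=
        (hMF k).mul (Real.measurable_exp.comp (((hμkF.const_mul s).neg).sub measurable_const))
      have hGm : Measurable G := hGF.mono (ℱ.le k) le_rfl
      have hG0 : ∀ ω, 0 ≤ G ω := fun ω => mul_nonneg (hM0 k ω) (Real.exp_pos _).le
      set CM : ℝ := Real.exp (|l| * ∑ i ∈ Finset.range n, |v i| * 2) with hCM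
      have hGbd : ∀ ω, |G ω| ≤ CM * Real.exp |s| := by
        intro ω
        rw [abs_of_nonneg (hG0 ω)]
        apply mul_le_mul (hMbd k ω) _ (Real.exp_pos _).le (Real.exp_pos _).le
        rw [Real.exp_le_exp]
        have h1 : -(s * μk ω) ≤ |s| := by
          calc -(s * μk ω) ≤ |s * μk ω| := neg_le_abs _
            _ = |s| * |μk ω| := abs_mul _ _
            _ ≤ |s| * 1 := mul_le_mul_of_nonneg_left (hμkbd ω) (abs_nonneg s)
            _ = |s| := mul_one _
        nlinarith [sq_nonneg s]
      have hGint : Integrable G P := hbint _ _ hGm hGbd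
      -- decomposition of M (k+1)
      have hsplit : ∀ ω, M (k+1) ω = M k ω * Real.exp (s * (X k ω - μk ω) - s^2/2) := by
        intro ω
        rw [hM, hM, ← Real.exp_add]
        congr 1
        have h1 : min (k+1) n = k + 1 := by omega
        have h2 : min k n = k := by omega
        rw [h1, h2, Finset.sum_range_succ, Finset.sum_range_succ, hs, hμk]
        ring
      -- pointwise chord bound
      have hpt : ∀ ω, M (k+1) ω ≤
          G ω * Real.cosh s + (G ω * Real.sinh s) * X k ω := by
        intro ω
        rw [hsplit ω]
        have h1 : Real.exp (s * (X k ω - μk ω) - s^2/2)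
            = Real.exp (-(s * μk ω) - s^2/2) * Real.exp (s * X k ω) := by
          rw [← Real.exp_add]; congr 1; ring
        rw [h1, ← mul_assoc]
        have h2 := wsr_chord (X k ω) s (hbound1 k hk ω)
        calc M k ω * Real.exp (-(s * μk ω) - s^2/2) * Real.exp (s * X k ω)
            ≤ M k ω * Real.exp (-(s * μk ω) - s^2/2) *
              (Real.cosh s + X k ω * Real.sinh s) :=
              mul_le_mul_of_nonneg_left h2 (hG0 ω)
          _ = G ω * Real.cosh s + (G ω * Real.sinh s) * X k ω := by rw [hG]; ring
      -- integrability of the dominating function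
      have hXkint : Integrable (X k) P := hbint _ 1 (hmeas k) (fun ω => hbound1 k hk ω)
      set CG : ℝ := CM * Real.exp |s| with hCG
      have hF1int : Integrable (fun ω => G ω * Real.cosh s) P := by
        apply hbint _ (CG * |Real.cosh s|) (hGm.mul_const _)
        intro ω
        rw [abs_mul]
        exact mul_le_mul_of_nonneg_right (hGbd ω) (abs_nonneg _)
      have hF2Xint : Integrable ((fun ω => G ω * Real.sinh s) * X k) P := by
        apply hbint _ (CG * |Real.sinh s| * 1)
        · exact (hGm.mul_const _).mul (hmeas k)
        · intro ω
          show |G ω * Real.sinh s * X k ω| ≤ CG * |Real.sinh s| * 1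
          rw [abs_mul, abs_mul]
          exact mul_le_mul (mul_le_mul_of_nonneg_right (hGbd ω) (abs_nonneg _))
            (hbound1 k hk ω) (abs_nonneg _) (by positivity)
      have hg0int : Integrable
          ((fun ω => G ω * Real.cosh s) + (fun ω => G ω * Real.sinh s) * X k) P :=
        hF1int.add hF2Xint
      have h1 : (P[M (k+1) | ℱ k]) ≤ᵐ[P]
          (P[(fun ω => G ω * Real.cosh s) + (fun ω => G ω * Real.sinh s) * X k | ℱ k]) :=
        condExp_mono (hMint (k+1)) hg0int (ae_of_all _ fun ω => hpt ω)
      have hadd := condExp_add (μ := P) (m := ℱ k) hF1int hF2Xint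
      have hconsteq : (P[(fun ω => G ω * Real.cosh s) | ℱ k])
          = (fun ω => G ω * Real.cosh s) :=
        condExp_of_stronglyMeasurable (ℱ.le k)
          ((hGF.mul_const _).stronglyMeasurable) hF1int
      have hmul : (P[(fun ω => G ω * Real.sinh s) * X k | ℱ k]) =ᵐ[P]
          (fun ω => G ω * Real.sinh s) * (P[X k | ℱ k]) :=
        condExp_mul_of_stronglyMeasurable_left ((hGF.mul_const _).stronglyMeasurable)
          hF2Xint hXkint
      refine h1.trans ?_
      filter_upwards [hadd, hmul, hcond k hk] with ω haddω hmulω hcondω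
      rw [haddω, Pi.add_apply, hconsteq, hmulω, Pi.mul_apply, hcondω]
      show G ω * Real.cosh s + G ω * Real.sinh s * μk ω ≤ M k ω
      have hkey := wsr_key_ineq (μk ω) s (hμkbd ω)
      have hGω : G ω * Real.exp (μk ω * s + s^2/2) = M k ω := by
        have hzero : (-(s * μk ω) - s^2/2) + (μk ω * s + s^2/2) = 0 := by ring
        rw [hG]
        show M k ω * Real.exp (-(s * μk ω) - s ^ 2 / 2) * Real.exp (μk ω * s + s ^ 2 / 2)
          = M k ω
        rw [mul_assoc, ← Real.exp_add, hzero, Real.exp_zero, mul_one]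
      calc G ω * Real.cosh s + G ω * Real.sinh s * μk ω
          = G ω * (Real.cosh s + μk ω * Real.sinh s) := by ring
        _ ≤ G ω * Real.exp (μk ω * s + s^2/2) :=
            mul_le_mul_of_nonneg_left hkey (hG0 ω)
        _ = M k ω := hGω
    · -- trivial case: `M (k+1) = M k`
      have heq : M (k+1) = M k := by
        funext ω; rw [hM, hM]
        have : min (k+1) n = min k n := by omega
        rw [this]
      rw [heq, condExp_of_stronglyMeasurable (ℱ.le k) (hadp k) (hMint k)]
  have hsup : Supermartingale M ℱ P := supermartingale_nat hadp hMint hstep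
  refine ⟨hsup, ?_⟩
  have h0 : ∫ ω, M 0 ω ∂P = 1 := by
    have he : M 0 = fun _ => (1:ℝ) := by
      funext ω; rw [hM]; simp
    rw [he, integral_const, probReal_univ]
    simp
  have hle := hsup.setIntegral_le (Nat.zero_le n) (MeasurableSet.univ)
  rw [setIntegral_univ, setIntegral_univ] at hle
  exact hle.trans_eq h0
end

section
/- Fix $n \ge 1$, $v \in \mathbb{R}^n$, and let $X_1,\dots,X_n \in [-1,1]$ be exchangeable. Fix $\lambda$ with $|\lambda| < \frac{3}{2\|v\|_\infty}$. Let $\bar{X}_{\ge i}$ and $\sigma^2_{X_{\ge i}}$ denote the mean and variance of $(X_i,\dots,X_n)$. Define $M_0 = 1$ and $M_k = \exp\{\lambda \sum_{i=1}^k v_i(X_i - \bar{X}_{\ge i}) - \frac{\lambda^2}{2(1 - \frac{2|\lambda|}{3}\|v\|_\infty)}\sum_{i=1}^k v_i^2 \sigma^2_{X_{\ge i}}\}$. Then $(M_k)$ is a supermartingale with respect to the filtration generated by $\bar{X}, \sigma^2_X, X_1, \dots, X_k$, so $\mathbb{E}[M_n] \le 1$. -/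
open MeasureTheory

lemma exp_series_bound {u c : ℝ} (hc : c < 1) (hu : |u| ≤ 3 * c) :
    Real.exp u ≤ 1 + u + u ^ 2 / (2 * (1 - c)) := by
  have hc0 : 0 ≤ c := by nlinarith [abs_nonneg u]
  have ha3 : |u| / 3 ≤ c := by linarith
  have ha1 : |u| / 3 < 1 := lt_of_le_of_lt ha3 hc
  have ha0 : 0 ≤ |u| / 3 := by positivity
  have h1 : Real.exp u = ∑' k : ℕ, u ^ k / k.factorial := by
    rw [Real.exp_eq_exp_ℝ, NormedSpace.exp_eq_tsum_div]
  have hsum : Summable (fun k : ℕ => u ^ k / k.factorial) :=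
    Real.summable_pow_div_factorial u
  have h2 : ∑ i ∈ Finset.range 2, u ^ i / (i.factorial : ℝ)
      + ∑' k : ℕ, u ^ (k + 2) / (k + 2).factorial = ∑' k : ℕ, u ^ k / k.factorial :=
    Summable.sum_add_tsum_nat_add 2 hsum
  have hfirst : ∑ i ∈ Finset.range 2, u ^ i / (i.factorial : ℝ) = 1 + u := by
    simp [Finset.sum_range_succ]
  have hgsum : Summable (fun k : ℕ => u ^ 2 / 2 * (|u| / 3) ^ k) :=
    (summable_geometric_of_lt_one ha0 ha1).mul_left _
  have hterm : ∀ k : ℕ, u ^ (k + 2) / ((k + 2).factorial : ℝ)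
      ≤ u ^ 2 / 2 * (|u| / 3) ^ k := by
    intro k
    have hfac : (2 : ℝ) * 3 ^ k ≤ ((k + 2).factorial : ℝ) := by
      induction k with
      | zero => norm_num
      | succ j ih =>
        have : ((j + 3).factorial : ℝ) = (j + 3) * (j + 2).factorial := by
          rw [Nat.factorial_succ]; push_cast; ring
        have h3 : (3 : ℝ) ≤ (j : ℝ) + 3 := by
          have : (0:ℝ) ≤ (j:ℝ) := Nat.cast_nonneg j
          linarith
        have hpos : (0 : ℝ) < 2 * 3 ^ j := by positivity
        calc (2 : ℝ) * 3 ^ (j + 1) = 3 * (2 * 3 ^ j) := by ring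
        _ ≤ ((j : ℝ) + 3) * (j + 2).factorial := by
            apply mul_le_mul h3 ih (le_of_lt hpos) (by positivity)
        _ = ((j + 3).factorial : ℝ) := by rw [this]
    have h1' : u ^ (k + 2) ≤ |u| ^ (k + 2) := le_trans (le_abs_self _) (by rw [abs_pow])
    have h2' : |u| ^ (k + 2) / ((k + 2).factorial : ℝ) ≤ |u| ^ (k + 2) / (2 * 3 ^ k) := by
      apply div_le_div_of_nonneg_left (by positivity) (by positivity) hfac
    calc u ^ (k + 2) / ((k + 2).factorial : ℝ) ≤ |u| ^ (k + 2) / ((k + 2).factorial : ℝ) := by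
          gcongr
    _ ≤ |u| ^ (k + 2) / (2 * 3 ^ k) := h2'
    _ = u ^ 2 / 2 * (|u| / 3) ^ k := by
        rw [div_pow, pow_add, sq_abs]
        field_simp
  have htail : ∑' k : ℕ, u ^ (k + 2) / ((k + 2).factorial : ℝ)
      ≤ ∑' k : ℕ, u ^ 2 / 2 * (|u| / 3) ^ k := by
    apply Summable.tsum_le_tsum hterm _ hgsum
    exact (summable_nat_add_iff 2).mpr hsum
  have hgeo : ∑' k : ℕ, u ^ 2 / 2 * (|u| / 3) ^ k = u ^ 2 / 2 * (1 - |u| / 3)⁻¹ := by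
    rw [tsum_mul_left, tsum_geometric_of_lt_one ha0 ha1]
  have hfin : u ^ 2 / 2 * (1 - |u| / 3)⁻¹ ≤ u ^ 2 / (2 * (1 - c)) := by
    have h1c : (0:ℝ) < 1 - c := by linarith
    have h1u : (0:ℝ) < 1 - |u|/3 := by linarith
    rw [div_eq_mul_inv (u^2) (2 * (1 - c)), mul_inv, ← mul_assoc, ← div_eq_mul_inv (u^2) 2]
    gcongr

  linarith [h1, h2, hfirst, htail, hgeo, hfin,
    le_trans htail (le_of_eq hgeo)]

lemma avg_exp_bound (s : Finset ℕ) (hs : s.Nonempty) (f : ℕ → ℝ) (t c : ℝ) (hc : c < 1)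
    (hb : ∀ j ∈ s, |t * (f j - (s.card : ℝ)⁻¹ * ∑ i ∈ s, f i)| ≤ 3 * c) :
    (s.card : ℝ)⁻¹ * ∑ j ∈ s, Real.exp (t * (f j - (s.card : ℝ)⁻¹ * ∑ i ∈ s, f i))
      ≤ Real.exp (t ^ 2 *
        ((s.card : ℝ)⁻¹ * ∑ j ∈ s, (f j - (s.card : ℝ)⁻¹ * ∑ i ∈ s, f i) ^ 2)
          / (2 * (1 - c))) := by
  set μ : ℝ := (s.card : ℝ)⁻¹ * ∑ i ∈ s, f i with hμ
  have hcard : (0 : ℝ) < (s.card : ℝ) := by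
    exact_mod_cast Finset.card_pos.mpr hs
  have hzero : ∑ j ∈ s, (f j - μ) = 0 := by
    rw [Finset.sum_sub_distrib, Finset.sum_const, nsmul_eq_mul, hμ]
    field_simp
    ring
  have h1c : (0 : ℝ) < 1 - c := by linarith
  have hsumle : ∑ j ∈ s, Real.exp (t * (f j - μ))
      ≤ ∑ j ∈ s, (1 + t * (f j - μ) + (t * (f j - μ)) ^ 2 / (2 * (1 - c))) := by
    refine Finset.sum_le_sum fun j hj => exp_series_bound hc (hb j hj)
  have hsum2 : ∑ j ∈ s, (1 + t * (f j - μ) + (t * (f j - μ)) ^ 2 / (2 * (1 - c)))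
      = (s.card : ℝ) + t ^ 2 * (∑ j ∈ s, (f j - μ) ^ 2) / (2 * (1 - c)) := by
    rw [Finset.sum_add_distrib, Finset.sum_add_distrib, Finset.sum_const, nsmul_eq_mul,
      ← Finset.mul_sum, hzero, ← Finset.sum_div]
    have : ∑ j ∈ s, (t * (f j - μ)) ^ 2 = t ^ 2 * ∑ j ∈ s, (f j - μ) ^ 2 := by
      rw [Finset.mul_sum]; exact Finset.sum_congr rfl fun j _ => by ring
    rw [this]; ring
  have key : (s.card : ℝ)⁻¹ * ∑ j ∈ s, Real.exp (t * (f j - μ))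
      ≤ 1 + t ^ 2 * ((s.card : ℝ)⁻¹ * ∑ j ∈ s, (f j - μ) ^ 2) / (2 * (1 - c)) := by
    have := mul_le_mul_of_nonneg_left (le_trans hsumle (le_of_eq hsum2))
      (le_of_lt (inv_pos.mpr hcard))
    calc (s.card : ℝ)⁻¹ * ∑ j ∈ s, Real.exp (t * (f j - μ))
        ≤ (s.card : ℝ)⁻¹ * ((s.card : ℝ) + t ^ 2 * (∑ j ∈ s, (f j - μ) ^ 2) / (2 * (1 - c))) :=
          this
      _ = 1 + t ^ 2 * ((s.card : ℝ)⁻¹ * ∑ j ∈ s, (f j - μ) ^ 2) / (2 * (1 - c)) := by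
          field_simp
  refine le_trans key ?_
  have := Real.add_one_le_exp (t ^ 2 * ((s.card : ℝ)⁻¹ * ∑ j ∈ s, (f j - μ) ^ 2) / (2 * (1 - c)))
  linarith

namespace BernsteinAux

/-- extension of a finite vector to ℕ by zero -/
noncomputable def xe (n : ℕ) (x : Fin n → ℝ) (j : ℕ) : ℝ := if h : j < n then x ⟨j, h⟩ else 0

noncomputable def mea (n i : ℕ) (x : Fin n → ℝ) : ℝ :=
  ((n : ℝ) - i)⁻¹ * ∑ j ∈ Finset.Ico i n, xe n x j

noncomputable def vaR (n i : ℕ) (x : Fin n → ℝ) : ℝ :=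
  ((n : ℝ) - i)⁻¹ * ∑ j ∈ Finset.Ico i n, (xe n x j - mea n i x) ^ 2

noncomputable def bar (n : ℕ) (x : Fin n → ℝ) : ℝ := (n : ℝ)⁻¹ * ∑ j ∈ Finset.range n, xe n x j

noncomputable def MM (n : ℕ) (v : ℕ → ℝ) (l κ : ℝ) (k : ℕ) (x : Fin n → ℝ) : ℝ :=
  Real.exp (l * ∑ i ∈ Finset.range (min k n), v i * (xe n x i - mea n i x) -
    κ * ∑ i ∈ Finset.range (min k n), v i ^ 2 * vaR n i x)

noncomputable def psi (n k : ℕ) (x : Fin n → ℝ) : ℝ × ℝ × (Fin n → ℝ) :=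
  (bar n x, vaR n 0 x, fun i => if i.val < k then x i else 0)

noncomputable def G (n : ℕ) (v : ℕ → ℝ) (l κ : ℝ) (k : ℕ) (B : Set (ℝ × ℝ × (Fin n → ℝ)))
    (j : ℕ) (x : Fin n → ℝ) : ℝ :=
  MM n v l κ k x *
    Real.exp (l * v k * (xe n x j - mea n k x) - κ * v k ^ 2 * vaR n k x) *
    B.indicator 1 (psi n k x)

/-- natural-number swap -/
def sw (k j m : ℕ) : ℕ := if m = k then j else if m = j then k else m

lemma sw_invol (k j m : ℕ) : sw k j (sw k j m) = m := by
  unfold sw; split_ifs <;> omega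

lemma sum_sw {i k j n : ℕ} (hik : i ≤ k) (hkj : k ≤ j) (hjn : j < n) (f : ℕ → ℝ) :
    ∑ m ∈ Finset.Ico i n, f (sw k j m) = ∑ m ∈ Finset.Ico i n, f m := by
  refine Finset.sum_nbij' (sw k j) (sw k j) ?_ ?_ ?_ ?_ ?_
  · intro a ha
    simp only [Finset.mem_Ico] at ha ⊢
    unfold sw; split_ifs <;> omega
  · intro a ha
    simp only [Finset.mem_Ico] at ha ⊢
    unfold sw; split_ifs <;> omega
  · intro a _; exact sw_invol k j a
  · intro a _; exact sw_invol k j a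
  · intro a _; rfl

lemma xe_comp_swap {n k j : ℕ} (hk : k < n) (hj : j < n) (x : Fin n → ℝ) :
    xe n (x ∘ Equiv.swap ⟨k, hk⟩ ⟨j, hj⟩) = fun m => xe n x (sw k j m) := by
  funext m
  unfold xe sw
  by_cases hm : m < n
  · rw [dif_pos hm]
    by_cases h1 : m = k
    · subst h1
      simp only [if_pos rfl]
      have : Equiv.swap (⟨m, hk⟩ : Fin n) ⟨j, hj⟩ ⟨m, hm⟩ = ⟨j, hj⟩ := by
        have : (⟨m, hm⟩ : Fin n) = ⟨m, hk⟩ := rfl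
        rw [this, Equiv.swap_apply_left]
      simp [Function.comp, this, dif_pos hj]
    · by_cases h2 : m = j
      · subst h2
        simp only [if_neg h1, if_pos rfl]
        have : Equiv.swap (⟨k, hk⟩ : Fin n) ⟨m, hj⟩ ⟨m, hm⟩ = ⟨k, hk⟩ := by
          have : (⟨m, hm⟩ : Fin n) = ⟨m, hj⟩ := rfl
          rw [this, Equiv.swap_apply_right]
        simp [Function.comp, this, dif_pos hk]
      · simp only [if_neg h1, if_neg h2]
        have : Equiv.swap (⟨k, hk⟩ : Fin n) ⟨j, hj⟩ ⟨m, hm⟩ = ⟨m, hm⟩ := by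
          apply Equiv.swap_apply_of_ne_of_ne
          · exact fun h => h1 (by simpa using congrArg Fin.val h)
          · exact fun h => h2 (by simpa using congrArg Fin.val h)
        simp [Function.comp, this, dif_pos hm]
  · rw [dif_neg hm]
    have h1 : m ≠ k := fun h => hm (h ▸ hk)
    have h2 : m ≠ j := fun h => hm (h ▸ hj)
    rw [if_neg h1, if_neg h2, dif_neg hm]

lemma mea_swap {n i k j : ℕ} (hik : i ≤ k) (hkj : k ≤ j) (hjn : j < n) (x : Fin n → ℝ) :
    mea n i (x ∘ Equiv.swap ⟨k, lt_of_le_of_lt hkj hjn⟩ ⟨j, hjn⟩) = mea n i x := by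
  unfold mea
  rw [xe_comp_swap]
  rw [sum_sw hik hkj hjn]

lemma vaR_swap {n i k j : ℕ} (hik : i ≤ k) (hkj : k ≤ j) (hjn : j < n) (x : Fin n → ℝ) :
    vaR n i (x ∘ Equiv.swap ⟨k, lt_of_le_of_lt hkj hjn⟩ ⟨j, hjn⟩) = vaR n i x := by
  unfold vaR
  rw [mea_swap hik hkj hjn, xe_comp_swap]
  rw [sum_sw hik hkj hjn (fun m => (xe n x m - mea n i x) ^ 2)]

lemma bar_swap {n k j : ℕ} (hkj : k ≤ j) (hjn : j < n) (x : Fin n → ℝ) :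
    bar n (x ∘ Equiv.swap ⟨k, lt_of_le_of_lt hkj hjn⟩ ⟨j, hjn⟩) = bar n x := by
  unfold bar
  rw [xe_comp_swap, Finset.range_eq_Ico]
  exact congrArg _ (sum_sw (Nat.zero_le k) hkj hjn (xe n x))

lemma sw_eq_self_of_lt {k j m : ℕ} (hmk : m < k) (hkj : k ≤ j) : sw k j m = m := by
  unfold sw; split_ifs <;> omega

lemma psi_swap {n k j : ℕ} (hkj : k ≤ j) (hjn : j < n) (x : Fin n → ℝ) :
    psi n k (x ∘ Equiv.swap ⟨k, lt_of_le_of_lt hkj hjn⟩ ⟨j, hjn⟩) = psi n k x := by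
  unfold psi
  rw [bar_swap hkj hjn, vaR_swap (Nat.zero_le k) hkj hjn]
  refine Prod.ext rfl (Prod.ext rfl ?_)
  simp only
  funext i
  by_cases hi : i.val < k
  · rw [if_pos hi, if_pos hi]
    have : (x ∘ Equiv.swap ⟨k, lt_of_le_of_lt hkj hjn⟩ ⟨j, hjn⟩) i = xe n x (sw k j i.val) := by
      have := congrFun (xe_comp_swap (lt_of_le_of_lt hkj hjn) hjn x) i.val
      unfold xe at this
      rw [dif_pos i.isLt] at this
      exact this
    rw [this, sw_eq_self_of_lt hi hkj]
    unfold xe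
    rw [dif_pos i.isLt]
  · rw [if_neg hi, if_neg hi]

lemma MM_swap {n k j : ℕ} (v : ℕ → ℝ) (l κ : ℝ) (hkn : k < n) (hkj : k ≤ j) (hjn : j < n)
    (x : Fin n → ℝ) :
    MM n v l κ k (x ∘ Equiv.swap ⟨k, lt_of_le_of_lt hkj hjn⟩ ⟨j, hjn⟩) = MM n v l κ k x := by
  unfold MM
  congr 1
  have hmin : min k n = k := min_eq_left (le_of_lt hkn)
  rw [hmin]
  congr 1
  · congr 1
    refine Finset.sum_congr rfl fun i hi => ?_
    rw [Finset.mem_range] at hi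
    rw [mea_swap (le_of_lt hi) hkj hjn, xe_comp_swap]
    simp only [sw_eq_self_of_lt hi hkj]
  · congr 1
    refine Finset.sum_congr rfl fun i hi => ?_
    rw [Finset.mem_range] at hi
    rw [vaR_swap (le_of_lt hi) hkj hjn]

lemma G_swap {n k j : ℕ} (v : ℕ → ℝ) (l κ : ℝ) (B : Set (ℝ × ℝ × (Fin n → ℝ)))
    (hkn : k < n) (hkj : k ≤ j) (hjn : j < n) (x : Fin n → ℝ) :
    G n v l κ k B k (x ∘ Equiv.swap ⟨k, lt_of_le_of_lt hkj hjn⟩ ⟨j, hjn⟩) =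
      G n v l κ k B j x := by
  unfold G
  rw [MM_swap v l κ hkn hkj hjn, mea_swap le_rfl hkj hjn, vaR_swap le_rfl hkj hjn,
    psi_swap hkj hjn, xe_comp_swap]
  have h : sw k j k = j := by unfold sw; simp
  simp only [h]


lemma measurable_xe (n j : ℕ) : Measurable (fun x : Fin n → ℝ => xe n x j) := by
  unfold xe
  by_cases h : j < n
  · simp only [dif_pos h]; exact measurable_pi_apply _
  · simp only [dif_neg h]; exact measurable_const

lemma measurable_mea (n i : ℕ) : Measurable (mea n i) := by
  unfold mea
  exact (Finset.measurable_sum _ fun j _ => measurable_xe n j).const_mul _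

lemma measurable_vaR (n i : ℕ) : Measurable (vaR n i) := by
  unfold vaR
  exact (Finset.measurable_sum _ fun j _ =>
    ((measurable_xe n j).sub (measurable_mea n i)).pow_const 2).const_mul _

lemma measurable_bar (n : ℕ) : Measurable (bar n) := by
  unfold bar
  exact (Finset.measurable_sum _ fun j _ => measurable_xe n j).const_mul _

lemma measurable_MM (n : ℕ) (v : ℕ → ℝ) (l κ : ℝ) (k : ℕ) : Measurable (MM n v l κ k) := by
  unfold MM
  apply Real.measurable_exp.comp
  apply Measurable.sub
  · exact (Finset.measurable_sum _ fun i _ =>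
      ((measurable_xe n i).sub (measurable_mea n i)).const_mul _).const_mul _
  · exact (Finset.measurable_sum _ fun i _ => (measurable_vaR n i).const_mul _).const_mul _

lemma measurable_psi (n k : ℕ) : Measurable (psi n k) := by
  unfold psi
  refine (measurable_bar n).prod ((measurable_vaR n 0).prod ?_)
  refine measurable_pi_lambda _ fun i => ?_
  by_cases h : i.val < k
  · simp only [if_pos h]; exact measurable_pi_apply i
  · simp only [if_neg h]; exact measurable_const

lemma measurable_G (n : ℕ) (v : ℕ → ℝ) (l κ : ℝ) (k : ℕ) (B : Set (ℝ × ℝ × (Fin n → ℝ)))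
    (hB : MeasurableSet B) (j : ℕ) : Measurable (G n v l κ k B j) := by
  unfold G
  refine ((measurable_MM n v l κ k).mul (Real.measurable_exp.comp ?_)).mul
    ((measurable_one.indicator hB).comp (measurable_psi n k))
  exact (((measurable_xe n j).sub (measurable_mea n k)).const_mul _).sub
    ((measurable_vaR n k).const_mul _)

lemma integral_G_swap {Ω : Type*} {m : MeasurableSpace Ω} (P : Measure Ω)
    (n : ℕ) (X : ℕ → Ω → ℝ) (hmeas : ∀ i, Measurable (X i))
    (hexch : ∀ π : Equiv.Perm (Fin n),
      Measure.map (fun ω => fun i : Fin n => X (π i).val ω) P =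
        Measure.map (fun ω => fun i : Fin n => X i.val ω) P)
    {k j : ℕ} (hkn : k < n) (hkj : k ≤ j) (hjn : j < n)
    (v : ℕ → ℝ) (l κ : ℝ) (B : Set (ℝ × ℝ × (Fin n → ℝ))) (hB : MeasurableSet B) :
    ∫ ω, G n v l κ k B j (fun i : Fin n => X i.val ω) ∂P =
      ∫ ω, G n v l κ k B k (fun i : Fin n => X i.val ω) ∂P := by
  set π : Equiv.Perm (Fin n) := Equiv.swap ⟨k, lt_of_le_of_lt hkj hjn⟩ ⟨j, hjn⟩ with hπ
  have hV : Measurable (fun ω => fun i : Fin n => X i.val ω) :=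
    measurable_pi_lambda _ fun i => hmeas i.val
  have hVπ : Measurable (fun ω => fun i : Fin n => X (π i).val ω) :=
    measurable_pi_lambda _ fun i => hmeas (π i).val
  have hGk : Measurable (G n v l κ k B k) := measurable_G n v l κ k B hB k
  have h1 : ∫ ω, G n v l κ k B k (fun i : Fin n => X i.val ω) ∂P =
      ∫ x, G n v l κ k B k x ∂(Measure.map (fun ω => fun i : Fin n => X i.val ω) P) :=
    (integral_map hV.aemeasurable hGk.aestronglyMeasurable).symm
  have h2 : ∫ x, G n v l κ k B k x
        ∂(Measure.map (fun ω => fun i : Fin n => X (π i).val ω) P) =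
      ∫ ω, G n v l κ k B k (fun i : Fin n => X (π i).val ω) ∂P :=
    integral_map hVπ.aemeasurable hGk.aestronglyMeasurable
  have h3 : ∀ ω, G n v l κ k B k (fun i : Fin n => X (π i).val ω) =
      G n v l κ k B j (fun i : Fin n => X i.val ω) := by
    intro ω
    have : (fun i : Fin n => X (π i).val ω) = (fun i : Fin n => X i.val ω) ∘ π := rfl
    rw [this, hπ]
    exact G_swap v l κ B hkn hkj hjn _
  rw [← integral_congr_ae (ae_of_all _ h3), ← h2, hexch π, ← h1]

end BernsteinAux

open BernsteinAux in
/-- The Bernstein-type supermartingale for exchangeable sequences (Proposition 2 of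
the paper): the process `M_k = exp(λ ∑_{i≤k} v_i (X_i - X̄_{≥i}) -
λ²/(2(1 - (2|λ|/3)‖v‖_∞)) ∑_{i≤k} v_i² σ²_{X_{≥i}})` is a supermartingale with respect
to the filtration generated by `X̄, σ²_X, X_1, …, X_k`, so `E[M_n] ≤ 1`. -/
theorem bernstein_supermartingale_exchangeable {Ω : Type*} {m : MeasurableSpace Ω}
    (P : Measure Ω) [IsProbabilityMeasure P] (n : ℕ) (hn : 1 ≤ n) (v : ℕ → ℝ)
    (X : ℕ → Ω → ℝ)
    (hmeas : ∀ i, Measurable (X i))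
    (hbdd : ∀ i < n, ∀ ω, X i ω ∈ Set.Icc (-1 : ℝ) 1)
    (hexch : ∀ π : Equiv.Perm (Fin n),
      Measure.map (fun ω => fun i : Fin n => X (π i).val ω) P =
        Measure.map (fun ω => fun i : Fin n => X i.val ω) P)
    (vinf : ℝ)
    (hvinf : vinf = (Finset.range n).sup'
      (Finset.nonempty_range_iff.mpr (by omega)) fun i => |v i|)
    (l : ℝ) (hl : |l| < 3 / (2 * vinf))
    (Xbar : Ω → ℝ) (hXbar : ∀ ω, Xbar ω = (n : ℝ)⁻¹ * ∑ j ∈ Finset.range n, X j ω)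
    (meanFrom : ℕ → Ω → ℝ)
    (hmeanFrom : ∀ i ω, meanFrom i ω = ((n : ℝ) - i)⁻¹ * ∑ j ∈ Finset.Ico i n, X j ω)
    (varFrom : ℕ → Ω → ℝ)
    (hvarFrom : ∀ i ω, varFrom i ω =
      ((n : ℝ) - i)⁻¹ * ∑ j ∈ Finset.Ico i n, (X j ω - meanFrom i ω) ^ 2)
    (M : ℕ → Ω → ℝ)
    (hM : ∀ k ω, M k ω = Real.exp (l * ∑ i ∈ Finset.range (min k n),
        v i * (X i ω - meanFrom i ω) -
      l ^ 2 / (2 * (1 - 2 * |l| / 3 * vinf)) *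
        ∑ i ∈ Finset.range (min k n), (v i) ^ 2 * varFrom i ω))
    (ℱ : Filtration ℕ m)
    (hℱ : ∀ k, ℱ k =
      MeasurableSpace.comap Xbar inferInstance ⊔
        MeasurableSpace.comap (varFrom 0) inferInstance ⊔
        ⨆ i ∈ Finset.range (min k n), MeasurableSpace.comap (X i) inferInstance) :
    Supermartingale M ℱ P ∧ ∫ ω, M n ω ∂P ≤ 1 := by
  classical
  have hn0 : (0 : ℝ) < n := by exact_mod_cast hn
  have hv_le : ∀ i, i < n → |v i| ≤ vinf := by
    intro i hi; rw [hvinf]; exact Finset.le_sup' (fun i => |v i|) (Finset.mem_range.mpr hi)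
  have hvinf_nonneg : 0 ≤ vinf := le_trans (abs_nonneg (v 0)) (hv_le 0 hn)
  have hvinf_pos : 0 < vinf := by
    rcases eq_or_lt_of_le hvinf_nonneg with h | h
    · exfalso
      rw [← h] at hl
      simp only [mul_zero, div_zero] at hl
      exact absurd hl (not_lt.mpr (abs_nonneg l))
    · exact h
  set c : ℝ := 2 * |l| / 3 * vinf with hcdef
  have hc0 : 0 ≤ c := by positivity
  have hc1 : c < 1 := by
    have h2v : (0 : ℝ) < 2 * vinf := by positivity
    have := (lt_div_iff₀ h2v).mp hl
    rw [hcdef]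
    nlinarith
  have h1c : (0 : ℝ) < 1 - c := by linarith
  set κ : ℝ := l ^ 2 / (2 * (1 - c)) with hκdef
  have hκ0 : 0 ≤ κ := by positivity
  set V : Ω → Fin n → ℝ := fun ω (i : Fin n) => X i.val ω with hVdef
  have hVmeas : Measurable V := measurable_pi_lambda _ fun i => hmeas i.val
  -- basic pointwise facts
  have hXb : ∀ j, j < n → ∀ ω, |X j ω| ≤ 1 := fun j hj ω =>
    abs_le.mpr ⟨(hbdd j hj ω).1, (hbdd j hj ω).2⟩
  have hnipos : ∀ i : ℕ, i < n → (0 : ℝ) < (n : ℝ) - i := by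
    intro i hi
    have : (i : ℝ) < n := by exact_mod_cast hi
    linarith
  have hIcoCard : ∀ i : ℕ, i < n → ((Finset.Ico i n).card : ℝ) = (n : ℝ) - i := by
    intro i hi
    rw [Nat.card_Ico, Nat.cast_sub (le_of_lt hi)]
  have hmean_b : ∀ i, i < n → ∀ ω, |meanFrom i ω| ≤ 1 := by
    intro i hi ω
    have hm := hnipos i hi
    have hS : |∑ j ∈ Finset.Ico i n, X j ω| ≤ (n : ℝ) - i := by
      rw [← hIcoCard i hi]
      calc |∑ j ∈ Finset.Ico i n, X j ω| ≤ ∑ j ∈ Finset.Ico i n, |X j ω| :=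
            Finset.abs_sum_le_sum_abs _ _
        _ ≤ ∑ j ∈ Finset.Ico i n, 1 :=
            Finset.sum_le_sum fun j hj => hXb j (Finset.mem_Ico.mp hj).2 ω
        _ = ((Finset.Ico i n).card : ℝ) := by rw [Finset.sum_const, nsmul_eq_mul, mul_one]
    rw [hmeanFrom]
    calc |((n : ℝ) - i)⁻¹ * ∑ j ∈ Finset.Ico i n, X j ω|
        = ((n : ℝ) - i)⁻¹ * |∑ j ∈ Finset.Ico i n, X j ω| := by
          rw [abs_mul, abs_of_pos (inv_pos.mpr hm)]
      _ ≤ ((n : ℝ) - i)⁻¹ * ((n : ℝ) - i) :=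
          mul_le_mul_of_nonneg_left hS (le_of_lt (inv_pos.mpr hm))
      _ = 1 := inv_mul_cancel₀ (ne_of_gt hm)
  have hdiff_b : ∀ i j, i < n → j < n → ∀ ω, |X j ω - meanFrom i ω| ≤ 2 := by
    intro i j hi hj ω
    calc |X j ω - meanFrom i ω| ≤ |X j ω| + |meanFrom i ω| := abs_sub _ _
      _ ≤ 1 + 1 := add_le_add (hXb j hj ω) (hmean_b i hi ω)
      _ = 2 := by norm_num
  have hvar_nonneg : ∀ i, i < n → ∀ ω, 0 ≤ varFrom i ω := by
    intro i hi ω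
    rw [hvarFrom]
    exact mul_nonneg (le_of_lt (inv_pos.mpr (hnipos i hi)))
      (Finset.sum_nonneg fun j _ => sq_nonneg _)
  have hvar_b : ∀ i, i < n → ∀ ω, varFrom i ω ≤ 4 := by
    intro i hi ω
    have hm := hnipos i hi
    rw [hvarFrom]
    have hS : ∑ j ∈ Finset.Ico i n, (X j ω - meanFrom i ω) ^ 2 ≤ ((n : ℝ) - i) * 4 := by
      rw [← hIcoCard i hi]
      calc ∑ j ∈ Finset.Ico i n, (X j ω - meanFrom i ω) ^ 2
          ≤ ∑ j ∈ Finset.Ico i n, 4 := by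
            refine Finset.sum_le_sum fun j hj => ?_
            have h2 := hdiff_b i j hi (Finset.mem_Ico.mp hj).2 ω
            calc (X j ω - meanFrom i ω) ^ 2 = |X j ω - meanFrom i ω| ^ 2 := (sq_abs _).symm
              _ ≤ 2 ^ 2 := pow_le_pow_left₀ (abs_nonneg _) h2 2
              _ = 4 := by norm_num
        _ = ((Finset.Ico i n).card : ℝ) * 4 := by rw [Finset.sum_const, nsmul_eq_mul]
    calc ((n : ℝ) - i)⁻¹ * ∑ j ∈ Finset.Ico i n, (X j ω - meanFrom i ω) ^ 2
        ≤ ((n : ℝ) - i)⁻¹ * (((n : ℝ) - i) * 4) :=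
          mul_le_mul_of_nonneg_left hS (le_of_lt (inv_pos.mpr hm))
      _ = 4 := by field_simp
  -- uniform bound for M
  have hMpos : ∀ k ω, 0 < M k ω := fun k ω => by rw [hM]; exact Real.exp_pos _
  have hMle : ∀ k ω, M k ω ≤
      Real.exp (|l| * ∑ i ∈ Finset.range n, |v i| * 2
        + κ * ∑ i ∈ Finset.range n, v i ^ 2 * 4) := by
    intro k ω
    rw [hM]
    rw [Real.exp_le_exp]
    have hsub : Finset.range (min k n) ⊆ Finset.range n :=
      Finset.range_subset_range.mpr (min_le_right _ _)
    have hb1 : l * ∑ i ∈ Finset.range (min k n), v i * (X i ω - meanFrom i ω)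
        ≤ |l| * ∑ i ∈ Finset.range n, |v i| * 2 := by
      calc l * ∑ i ∈ Finset.range (min k n), v i * (X i ω - meanFrom i ω)
          ≤ |l * ∑ i ∈ Finset.range (min k n), v i * (X i ω - meanFrom i ω)| := le_abs_self _
        _ = |l| * |∑ i ∈ Finset.range (min k n), v i * (X i ω - meanFrom i ω)| := abs_mul _ _
        _ ≤ |l| * ∑ i ∈ Finset.range (min k n), |v i| * 2 := by
            refine mul_le_mul_of_nonneg_left ?_ (abs_nonneg l)
            refine le_trans (Finset.abs_sum_le_sum_abs _ _) (Finset.sum_le_sum fun i hi => ?_)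
            have hin : i < n := lt_of_lt_of_le (Finset.mem_range.mp hi) (min_le_right _ _)
            rw [abs_mul]
            exact mul_le_mul_of_nonneg_left (hdiff_b i i hin hin ω) (abs_nonneg _)
        _ ≤ |l| * ∑ i ∈ Finset.range n, |v i| * 2 := by
            refine mul_le_mul_of_nonneg_left ?_ (abs_nonneg l)
            exact Finset.sum_le_sum_of_subset_of_nonneg hsub fun i _ _ => by positivity
    have hb2 : 0 ≤ κ * ∑ i ∈ Finset.range (min k n), v i ^ 2 * varFrom i ω := by
      refine mul_nonneg hκ0 (Finset.sum_nonneg fun i hi => ?_)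
      have hin : i < n := lt_of_lt_of_le (Finset.mem_range.mp hi) (min_le_right _ _)
      exact mul_nonneg (sq_nonneg _) (hvar_nonneg i hin ω)
    have hb3 : 0 ≤ κ * ∑ i ∈ Finset.range n, v i ^ 2 * 4 := by
      refine mul_nonneg hκ0 (Finset.sum_nonneg fun i hi => by positivity)
    linarith
  have hmeanMeas : ∀ i, Measurable (meanFrom i) := by
    intro i
    have : meanFrom i = fun ω => ((n : ℝ) - i)⁻¹ * ∑ j ∈ Finset.Ico i n, X j ω :=
      funext fun ω => hmeanFrom i ω
    rw [this]
    exact (Finset.measurable_sum _ fun j _ => hmeas j).const_mul _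
  have hvarMeas : ∀ i, Measurable (varFrom i) := by
    intro i
    have : varFrom i = fun ω =>
        ((n : ℝ) - i)⁻¹ * ∑ j ∈ Finset.Ico i n, (X j ω - meanFrom i ω) ^ 2 :=
      funext fun ω => hvarFrom i ω
    rw [this]
    exact (Finset.measurable_sum _ fun j _ =>
      ((hmeas j).sub (hmeanMeas i)).pow_const 2).const_mul _
  have hMmeas : ∀ k, Measurable (M k) := by
    intro k
    have : M k = fun ω => Real.exp (l * ∑ i ∈ Finset.range (min k n),
        v i * (X i ω - meanFrom i ω) -
      κ * ∑ i ∈ Finset.range (min k n), v i ^ 2 * varFrom i ω) :=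
      funext fun ω => hM k ω
    rw [this]
    refine Real.measurable_exp.comp (Measurable.sub ?_ ?_)
    · exact (Finset.measurable_sum _ fun i _ =>
        ((hmeas i).sub (hmeanMeas i)).const_mul _).const_mul _
    · exact (Finset.measurable_sum _ fun i _ =>
        (hvarMeas i).const_mul _).const_mul _
  have hMint : ∀ k, Integrable (M k) P := by
    intro k
    refine Integrable.mono' (integrable_const (Real.exp (|l| * ∑ i ∈ Finset.range n, |v i| * 2
        + κ * ∑ i ∈ Finset.range n, v i ^ 2 * 4))) (hMmeas k).aestronglyMeasurable
      (ae_of_all _ fun ω => ?_)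
    rw [Real.norm_eq_abs, abs_of_pos (hMpos k ω)]
    exact hMle k ω
  -- identification with the vector-level functions
  have hxeV : ∀ (j : ℕ), j < n → ∀ ω, xe n (V ω) j = X j ω := by
    intro j hj ω
    unfold xe
    rw [dif_pos hj]
  have hmeaV : ∀ i ω, mea n i (V ω) = meanFrom i ω := by
    intro i ω
    rw [hmeanFrom]
    unfold mea
    congr 1
    exact Finset.sum_congr rfl fun j hj => hxeV j (Finset.mem_Ico.mp hj).2 ω
  have hbarV : ∀ ω, bar n (V ω) = Xbar ω := by
    intro ω
    rw [hXbar]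
    unfold bar
    congr 1
    exact Finset.sum_congr rfl fun j hj => hxeV j (Finset.mem_range.mp hj) ω
  have hvaRV : ∀ i ω, vaR n i (V ω) = varFrom i ω := by
    intro i ω
    rw [hvarFrom]
    unfold vaR
    congr 1
    refine Finset.sum_congr rfl fun j hj => ?_
    rw [hxeV j (Finset.mem_Ico.mp hj).2 ω, hmeaV i ω]
  have hMMV : ∀ k ω, MM n v l κ k (V ω) = M k ω := by
    intro k ω
    rw [hM]
    unfold MM
    congr 2
    · congr 1
      refine Finset.sum_congr rfl fun i hi => ?_
      have hin : i < n := lt_of_lt_of_le (Finset.mem_range.mp hi) (min_le_right _ _)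
      rw [hxeV i hin ω, hmeaV i ω]
    · congr 1
      exact Finset.sum_congr rfl fun i hi => by rw [hvaRV i ω]
  -- algebraic identities
  have hId2 : ∀ i, i < n → ∀ ω, varFrom i ω
      = ((n : ℝ) - i)⁻¹ * (∑ j ∈ Finset.Ico i n, (X j ω) ^ 2) - (meanFrom i ω) ^ 2 := by
    intro i hi ω
    have hm := hnipos i hi
    have hmne : ((n : ℝ) - i) ≠ 0 := ne_of_gt hm
    have hsum : ∑ j ∈ Finset.Ico i n, X j ω = ((n : ℝ) - i) * meanFrom i ω := by
      rw [hmeanFrom]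
      field_simp
    have hexpand : ∑ j ∈ Finset.Ico i n, (X j ω - meanFrom i ω) ^ 2
        = (∑ j ∈ Finset.Ico i n, (X j ω) ^ 2)
          - 2 * meanFrom i ω * ∑ j ∈ Finset.Ico i n, X j ω
          + ((n : ℝ) - i) * (meanFrom i ω) ^ 2 := by
      calc ∑ j ∈ Finset.Ico i n, (X j ω - meanFrom i ω) ^ 2
          = ∑ j ∈ Finset.Ico i n,
              ((X j ω) ^ 2 - 2 * meanFrom i ω * X j ω + (meanFrom i ω) ^ 2) :=
            Finset.sum_congr rfl fun j _ => by ring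
        _ = (∑ j ∈ Finset.Ico i n, (X j ω) ^ 2)
              - ∑ j ∈ Finset.Ico i n, 2 * meanFrom i ω * X j ω
              + ∑ j ∈ Finset.Ico i n, (meanFrom i ω) ^ 2 := by
            rw [Finset.sum_add_distrib, Finset.sum_sub_distrib]
        _ = _ := by
            rw [← Finset.mul_sum, Finset.sum_const, nsmul_eq_mul, hIcoCard i hi]
    rw [hvarFrom, hexpand, hsum]
    field_simp
    ring
  have hSQ0 : ∀ ω, ∑ j ∈ Finset.range n, (X j ω) ^ 2
      = (n : ℝ) * (varFrom 0 ω + Xbar ω ^ 2) := by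
    intro ω
    have h0 := hId2 0 (by omega) ω
    have hm0 : meanFrom 0 ω = Xbar ω := by
      rw [hmeanFrom, hXbar, ← Finset.range_eq_Ico]
      norm_num
    have hrange : Finset.Ico 0 n = Finset.range n := by rw [Finset.range_eq_Ico]
    rw [hm0, hrange] at h0
    have hne : (n : ℝ) ≠ 0 := ne_of_gt hn0
    have h0' : varFrom 0 ω = (n : ℝ)⁻¹ * (∑ j ∈ Finset.range n, (X j ω) ^ 2) - Xbar ω ^ 2 := by
      simpa using h0
    rw [h0']
    field_simp
    ring
  -- adaptedness
  have hadp : StronglyAdapted ℱ M := by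
    intro k
    have hXbar_k : Measurable[ℱ k] Xbar :=
      measurable_iff_comap_le.mpr (by rw [hℱ k]; exact le_sup_of_le_left le_sup_left)
    have hvar0_k : Measurable[ℱ k] (varFrom 0) :=
      measurable_iff_comap_le.mpr (by rw [hℱ k]; exact le_sup_of_le_left le_sup_right)
    have hX_k : ∀ i, i < min k n → Measurable[ℱ k] (X i) := by
      intro i hi
      refine measurable_iff_comap_le.mpr ?_
      rw [hℱ k]
      refine le_sup_of_le_right ?_
      exact le_iSup₂ (f := fun i (_ : i ∈ Finset.range (min k n)) =>
        MeasurableSpace.comap (X i) inferInstance) i (Finset.mem_range.mpr hi)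
    have hmean_k : ∀ i, i < min k n → Measurable[ℱ k] (meanFrom i) := by
      intro i hik
      have hin : i < n := lt_of_lt_of_le hik (min_le_right _ _)
      have hfun : meanFrom i = fun ω =>
          ((n : ℝ) - i)⁻¹ * ((n : ℝ) * Xbar ω - ∑ j ∈ Finset.range i, X j ω) := by
        funext ω
        rw [hmeanFrom]
        congr 1
        rw [hXbar, Finset.sum_Ico_eq_sub _ (le_of_lt hin)]
        have hne : (n : ℝ) ≠ 0 := ne_of_gt hn0
        field_simp
      rw [hfun]
      refine Measurable.const_mul (Measurable.sub (hXbar_k.const_mul _) ?_) _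
      exact Finset.measurable_sum _ fun j hj => hX_k j (lt_trans (Finset.mem_range.mp hj) hik)
    have hvar_k : ∀ i, i < min k n → Measurable[ℱ k] (varFrom i) := by
      intro i hik
      have hin : i < n := lt_of_lt_of_le hik (min_le_right _ _)
      have hfun : varFrom i = fun ω =>
          ((n : ℝ) - i)⁻¹ *
            ((n : ℝ) * (varFrom 0 ω + Xbar ω ^ 2) - ∑ j ∈ Finset.range i, (X j ω) ^ 2)
            - (meanFrom i ω) ^ 2 := by
        funext ω
        rw [hId2 i hin ω]
        congr 2
        rw [Finset.sum_Ico_eq_sub (fun j => (X j ω) ^ 2) (le_of_lt hin), hSQ0 ω]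
      rw [hfun]
      refine Measurable.sub (Measurable.const_mul (Measurable.sub
        ((hvar0_k.add (hXbar_k.pow_const 2)).const_mul _) ?_) _) ((hmean_k i hik).pow_const 2)
      exact Finset.measurable_sum _ fun j hj =>
        (hX_k j (lt_trans (Finset.mem_range.mp hj) hik)).pow_const 2
    refine Measurable.stronglyMeasurable ?_
    have hfun : M k = fun ω => Real.exp (l * ∑ i ∈ Finset.range (min k n),
        v i * (X i ω - meanFrom i ω) -
      κ * ∑ i ∈ Finset.range (min k n), v i ^ 2 * varFrom i ω) := funext fun ω => hM k ω
    rw [hfun]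
    refine Real.measurable_exp.comp (Measurable.sub ?_ ?_)
    · exact (Finset.measurable_sum _ fun i hi =>
        ((hX_k i (Finset.mem_range.mp hi)).sub
          (hmean_k i (Finset.mem_range.mp hi))).const_mul _).const_mul _
    · exact (Finset.measurable_sum _ fun i hi =>
        ((hvar_k i (Finset.mem_range.mp hi)).const_mul _)).const_mul _
  -- key one-step set-integral inequality
  have key : ∀ k, ∀ s : Set Ω, MeasurableSet[ℱ k] s →
      ∫ ω in s, M (k + 1) ω ∂P ≤ ∫ ω in s, M k ω ∂P := by
    intro k s hs
    by_cases hkn : k < n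
    swap
    · have heq : M (k + 1) = M k := by
        funext ω
        rw [hM, hM, min_eq_right (Nat.le_of_not_lt hkn),
          min_eq_right (le_trans (Nat.le_of_not_lt hkn) (Nat.le_succ k))]
      rw [heq]
    · have hsm' : MeasurableSet s := ℱ.le k s hs
      have hminkk : min k n = k := min_eq_left (le_of_lt hkn)
      have hcomap : (ℱ k : MeasurableSpace Ω) ≤
          MeasurableSpace.comap (fun ω => psi n k (V ω)) inferInstance := by
        rw [hℱ k]
        refine sup_le (sup_le ?_ ?_) ?_
        · have hfun : Xbar =
              (fun p : ℝ × ℝ × (Fin n → ℝ) => p.1) ∘ (fun ω => psi n k (V ω)) := by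
            funext ω
            exact (hbarV ω).symm
          rw [hfun, ← MeasurableSpace.comap_comp]
          exact MeasurableSpace.comap_mono (measurable_iff_comap_le.mp measurable_fst)
        · have hfun : varFrom 0 =
              (fun p : ℝ × ℝ × (Fin n → ℝ) => p.2.1) ∘ (fun ω => psi n k (V ω)) := by
            funext ω
            exact (hvaRV 0 ω).symm
          rw [hfun, ← MeasurableSpace.comap_comp]
          exact MeasurableSpace.comap_mono
            (measurable_iff_comap_le.mp (measurable_fst.comp measurable_snd))
        · refine iSup_le fun i => iSup_le fun hi => ?_
          rw [Finset.mem_range, hminkk] at hi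
          have hin : i < n := lt_trans hi hkn
          have hfun : X i =
              (fun p : ℝ × ℝ × (Fin n → ℝ) => p.2.2 ⟨i, hin⟩) ∘ (fun ω => psi n k (V ω)) := by
            funext ω
            show X i ω = (psi n k (V ω)).2.2 ⟨i, hin⟩
            show X i ω = if ((⟨i, hin⟩ : Fin n) : ℕ) < k then V ω ⟨i, hin⟩ else 0
            rw [if_pos hi]
          rw [hfun, ← MeasurableSpace.comap_comp]
          refine MeasurableSpace.comap_mono (measurable_iff_comap_le.mp ?_)
          exact (measurable_pi_apply _).comp (measurable_snd.comp measurable_snd)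
      obtain ⟨B, hB, hpre⟩ := MeasurableSpace.measurableSet_comap.mp (hcomap s hs)
      have hmem : ∀ ω, psi n k (V ω) ∈ B ↔ ω ∈ s := by
        intro ω
        rw [← hpre, Set.mem_preimage]
      have hind : ∀ ω, B.indicator (1 : (ℝ × ℝ × (Fin n → ℝ)) → ℝ) (psi n k (V ω))
          = s.indicator (1 : Ω → ℝ) ω := by
        intro ω
        by_cases hω : ω ∈ s
        · rw [Set.indicator_of_mem ((hmem ω).mpr hω), Set.indicator_of_mem hω]
          rfl
        · rw [Set.indicator_of_notMem (fun hc => hω ((hmem ω).mp hc)),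
            Set.indicator_of_notMem hω]
      have hstep : ∀ ω, M (k + 1) ω = M k ω *
          Real.exp (l * v k * (X k ω - meanFrom k ω) - κ * v k ^ 2 * varFrom k ω) := by
        intro ω
        rw [hM, hM, ← Real.exp_add]
        congr 1
        rw [min_eq_left (Nat.succ_le_of_lt hkn), hminkk, Finset.sum_range_succ,
          Finset.sum_range_succ]
        ring
      have hGdef : ∀ j ω, G n v l κ k B j (V ω) = MM n v l κ k (V ω) *
          Real.exp (l * v k * (xe n (V ω) j - mea n k (V ω)) - κ * v k ^ 2 * vaR n k (V ω)) *
          B.indicator 1 (psi n k (V ω)) := fun j ω => rfl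
      have hGk_eq : ∀ ω, G n v l κ k B k (V ω) = s.indicator (M (k + 1)) ω := by
        intro ω
        rw [hGdef, hMMV, hxeV k hkn, hmeaV, hvaRV, hind, ← hstep]
        by_cases hω : ω ∈ s
        · rw [Set.indicator_of_mem hω, Set.indicator_of_mem hω, Pi.one_apply, mul_one]
        · rw [Set.indicator_of_notMem hω, Set.indicator_of_notMem hω, mul_zero]
      have hGj_eq : ∀ j, j ∈ Finset.Ico k n → ∀ ω, G n v l κ k B j (V ω) =
          M k ω * Real.exp (-(κ * v k ^ 2 * varFrom k ω)) * s.indicator 1 ω *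
            Real.exp (l * v k * (X j ω - meanFrom k ω)) := by
        intro j hj ω
        rw [Finset.mem_Ico] at hj
        rw [hGdef, hMMV, hxeV j hj.2, hmeaV, hvaRV, hind, sub_eq_add_neg, Real.exp_add]
        ring
      have hGnn : ∀ j ω, 0 ≤ G n v l κ k B j (V ω) := by
        intro j ω
        rw [hGdef]
        refine mul_nonneg (mul_nonneg ?_ (le_of_lt (Real.exp_pos _))) ?_
        · rw [hMMV]; exact le_of_lt (hMpos k ω)
        · exact Set.indicator_nonneg (fun _ _ => zero_le_one) _
      have hindic_le_one : ∀ ω, s.indicator (1 : Ω → ℝ) ω ≤ 1 := by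
        intro ω
        by_cases hω : ω ∈ s
        · rw [Set.indicator_of_mem hω]; exact le_refl 1
        · rw [Set.indicator_of_notMem hω]; exact zero_le_one
      have hGbdd : ∀ j, j ∈ Finset.Ico k n → ∀ ω, G n v l κ k B j (V ω) ≤
          Real.exp (|l| * ∑ i ∈ Finset.range n, |v i| * 2
            + κ * ∑ i ∈ Finset.range n, v i ^ 2 * 4) * Real.exp (|l| * vinf * 2) := by
        intro j hj ω
        rw [hGj_eq j hj ω]
        rw [Finset.mem_Ico] at hj
        have hA1 : M k ω * Real.exp (-(κ * v k ^ 2 * varFrom k ω)) * s.indicator 1 ω ≤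
            Real.exp (|l| * ∑ i ∈ Finset.range n, |v i| * 2
              + κ * ∑ i ∈ Finset.range n, v i ^ 2 * 4) := by
          have hB1 : Real.exp (-(κ * v k ^ 2 * varFrom k ω)) ≤ 1 := by
            rw [Real.exp_le_one_iff]
            have : 0 ≤ κ * v k ^ 2 * varFrom k ω :=
              mul_nonneg (mul_nonneg hκ0 (sq_nonneg _)) (hvar_nonneg k hkn ω)
            linarith
          calc M k ω * Real.exp (-(κ * v k ^ 2 * varFrom k ω)) * s.indicator 1 ω
              ≤ M k ω * 1 * 1 := by
                refine mul_le_mul (mul_le_mul_of_nonneg_left hB1 (le_of_lt (hMpos k ω)))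
                  (hindic_le_one ω) (Set.indicator_nonneg (fun _ _ => zero_le_one) _) ?_
                have := hMpos k ω
                nlinarith [Real.exp_pos (-(κ * v k ^ 2 * varFrom k ω))]
            _ = M k ω := by ring
            _ ≤ _ := hMle k ω
        have hE : Real.exp (l * v k * (X j ω - meanFrom k ω)) ≤ Real.exp (|l| * vinf * 2) := by
          rw [Real.exp_le_exp]
          have h2 := hdiff_b k j hkn hj.2 ω
          have hvk := hv_le k hkn
          calc l * v k * (X j ω - meanFrom k ω) ≤ |l * v k * (X j ω - meanFrom k ω)| :=
                le_abs_self _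
            _ = |l| * |v k| * |X j ω - meanFrom k ω| := by rw [abs_mul, abs_mul]
            _ ≤ |l| * vinf * 2 := by
                refine mul_le_mul (mul_le_mul_of_nonneg_left hvk (abs_nonneg l)) h2
                  (abs_nonneg _) (by positivity)
        refine mul_le_mul hA1 hE (le_of_lt (Real.exp_pos _)) (le_of_lt (Real.exp_pos _))
      have hGint : ∀ j ∈ Finset.Ico k n, Integrable (fun ω => G n v l κ k B j (V ω)) P := by
        intro j hj
        refine Integrable.mono' (integrable_const
          (Real.exp (|l| * ∑ i ∈ Finset.range n, |v i| * 2
            + κ * ∑ i ∈ Finset.range n, v i ^ 2 * 4) * Real.exp (|l| * vinf * 2)))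
          (((measurable_G n v l κ k B hB j).comp hVmeas).aestronglyMeasurable)
          (ae_of_all _ fun ω => ?_)
        rw [Real.norm_eq_abs, abs_of_nonneg (hGnn j ω)]
        exact hGbdd j hj ω
      have hswap : ∀ j ∈ Finset.Ico k n,
          ∫ ω, G n v l κ k B j (V ω) ∂P = ∫ ω, G n v l κ k B k (V ω) ∂P := by
        intro j hj
        rw [Finset.mem_Ico] at hj
        exact integral_G_swap P n X hmeas hexch hkn hj.1 hj.2 v l κ B hB
      have hpt : ∀ ω, ((n : ℝ) - k)⁻¹ * ∑ j ∈ Finset.Ico k n, G n v l κ k B j (V ω)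
          ≤ s.indicator (M k) ω := by
        intro ω
        have hA0 : 0 ≤ M k ω * Real.exp (-(κ * v k ^ 2 * varFrom k ω)) * s.indicator 1 ω :=
          mul_nonneg (mul_nonneg (le_of_lt (hMpos k ω)) (le_of_lt (Real.exp_pos _)))
            (Set.indicator_nonneg (fun _ _ => zero_le_one) _)
        have hsum : ∑ j ∈ Finset.Ico k n, G n v l κ k B j (V ω)
            = (M k ω * Real.exp (-(κ * v k ^ 2 * varFrom k ω)) * s.indicator 1 ω) *
              ∑ j ∈ Finset.Ico k n, Real.exp (l * v k * (X j ω - meanFrom k ω)) := by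
          rw [Finset.mul_sum]
          exact Finset.sum_congr rfl fun j hj => hGj_eq j hj ω
        have hμeq : meanFrom k ω
            = ((Finset.Ico k n).card : ℝ)⁻¹ * ∑ i ∈ Finset.Ico k n, X i ω := by
          rw [hmeanFrom, hIcoCard k hkn]
        have hb : ∀ j ∈ Finset.Ico k n,
            |l * v k * (X j ω - ((Finset.Ico k n).card : ℝ)⁻¹ *
              ∑ i ∈ Finset.Ico k n, X i ω)| ≤ 3 * c := by
          intro j hj
          rw [← hμeq]
          have h2 := hdiff_b k j hkn (Finset.mem_Ico.mp hj).2 ω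
          have hvk := hv_le k hkn
          rw [abs_mul, abs_mul]
          calc |l| * |v k| * |X j ω - meanFrom k ω| ≤ |l| * vinf * 2 := by
                refine mul_le_mul (mul_le_mul_of_nonneg_left hvk (abs_nonneg l)) h2
                  (abs_nonneg _) (by positivity)
            _ = 3 * c := by rw [hcdef]; ring
        have havg := avg_exp_bound (Finset.Ico k n) (Finset.nonempty_Ico.mpr hkn)
          (fun j => X j ω) (l * v k) c hc1 hb
        rw [← hμeq] at havg
        have hvar : ((Finset.Ico k n).card : ℝ)⁻¹ *
            ∑ j ∈ Finset.Ico k n, (X j ω - meanFrom k ω) ^ 2 = varFrom k ω := by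
          rw [hvarFrom, hIcoCard k hkn]
        rw [hvar] at havg
        have hexp_eq : (l * v k) ^ 2 * varFrom k ω / (2 * (1 - c))
            = κ * v k ^ 2 * varFrom k ω := by
          rw [hκdef]
          ring
        have hcard' : ((Finset.Ico k n).card : ℝ) = (n : ℝ) - k := hIcoCard k hkn
        calc ((n : ℝ) - k)⁻¹ * ∑ j ∈ Finset.Ico k n, G n v l κ k B j (V ω)
            = (M k ω * Real.exp (-(κ * v k ^ 2 * varFrom k ω)) * s.indicator 1 ω) *
              (((n : ℝ) - k)⁻¹ *
                ∑ j ∈ Finset.Ico k n, Real.exp (l * v k * (X j ω - meanFrom k ω))) := by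
              rw [hsum]; ring
          _ ≤ (M k ω * Real.exp (-(κ * v k ^ 2 * varFrom k ω)) * s.indicator 1 ω) *
              Real.exp (κ * v k ^ 2 * varFrom k ω) := by
              refine mul_le_mul_of_nonneg_left ?_ hA0
              rw [← hcard', ← hexp_eq]
              exact havg
          _ = M k ω * s.indicator 1 ω *
              (Real.exp (-(κ * v k ^ 2 * varFrom k ω)) *
               Real.exp (κ * v k ^ 2 * varFrom k ω)) := by ring
          _ = M k ω * s.indicator 1 ω := by
              rw [← Real.exp_add, neg_add_cancel, Real.exp_zero, mul_one]
          _ = s.indicator (M k) ω := by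
              by_cases hω : ω ∈ s
              · rw [Set.indicator_of_mem hω, Set.indicator_of_mem hω, Pi.one_apply, mul_one]
              · rw [Set.indicator_of_notMem hω, Set.indicator_of_notMem hω, mul_zero]
      calc ∫ ω in s, M (k + 1) ω ∂P = ∫ ω, s.indicator (M (k + 1)) ω ∂P :=
            (integral_indicator hsm').symm
        _ = ∫ ω, G n v l κ k B k (V ω) ∂P :=
            (integral_congr_ae (ae_of_all _ fun ω => hGk_eq ω)).symm
        _ = ((n : ℝ) - k)⁻¹ * ∑ j ∈ Finset.Ico k n, ∫ ω, G n v l κ k B j (V ω) ∂P := by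
            rw [Finset.sum_congr rfl hswap, Finset.sum_const, nsmul_eq_mul, hIcoCard k hkn]
            rw [← mul_assoc, inv_mul_cancel₀ (ne_of_gt (hnipos k hkn)), one_mul]
        _ = ∫ ω, ((n : ℝ) - k)⁻¹ * ∑ j ∈ Finset.Ico k n, G n v l κ k B j (V ω) ∂P := by
            rw [integral_const_mul, integral_finset_sum _ hGint]
        _ ≤ ∫ ω, s.indicator (M k) ω ∂P := by
            refine integral_mono ?_ ((hMint k).indicator hsm') hpt
            exact (integrable_finset_sum _ hGint).const_mul _
        _ = ∫ ω in s, M k ω ∂P := integral_indicator hsm'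
  have hsm : Supermartingale M ℱ P :=
    supermartingale_of_setIntegral_succ_le hadp hMint key
  refine ⟨hsm, ?_⟩
  have h0 : ∀ ω, M 0 ω = 1 := by
    intro ω
    rw [hM]
    simp
  have huniv : MeasurableSet[ℱ 0] Set.univ := MeasurableSet.univ
  have := hsm.setIntegral_le (Nat.zero_le n) huniv
  rw [setIntegral_univ, setIntegral_univ] at this
  refine le_trans this ?_
  rw [integral_congr_ae (ae_of_all _ h0)]
  simp
end

section
/- For $n \ge 2$, define $B_n \in \mathbb{R}^{n\times n}$ with $i$th row $(\mathbf{0}_{i-1}, \frac{1}{n+1-i}\mathbf{1}_{n+1-i})$, and $A_n \in \mathbb{R}^{n\times n}$ with $i$th row $(\mathbf{0}_{i-1}, 1, -\frac{1}{n-i}\mathbf{1}_{n-i})$ for $i \le n-1$ and $n$th row zero. Then $A_n^\top (I_n - B_n) = \mathcal{P}^\perp_{\mathbf{1}_n}$, the orthogonal projection onto the subspace orthogonal to the all-ones vector $\mathbf{1}_n$. -/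
open Matrix

/-- The running-mean matrix `B_n`, whose `i`th row is `(0,…,0, 1/(n+1-i),…,1/(n+1-i))`
(rows and columns indexed from `0`). -/
noncomputable def matB (n : ℕ) : Matrix (Fin n) (Fin n) ℝ :=
  Matrix.of fun i j => if i ≤ j then ((n : ℝ) - i)⁻¹ else 0

/-- The matrix `A_n`, whose `i`th row is `(0,…,0, 1, -1/(n-i),…,-1/(n-i))` for
`i < n-1` (0-indexed), with last row zero. -/
noncomputable def matA (n : ℕ) : Matrix (Fin n) (Fin n) ℝ :=
  Matrix.of fun i j =>
    if (i : ℕ) = n - 1 then 0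
    else if j = i then 1
    else if i < j then -(((n : ℝ) - 1 - i)⁻¹) else 0

/-- Orthogonal projection onto the complement of the all-ones vector. -/
noncomputable def projPerpOnes (n : ℕ) : Matrix (Fin n) (Fin n) ℝ :=
  1 - Matrix.of fun _ _ => (n : ℝ)⁻¹


lemma tele (n K : ℕ) (hK : K ≤ n - 1) (hn : 1 ≤ n) :
    ∑ k ∈ Finset.range K, (((n:ℝ) - 1 - k)⁻¹ * ((n:ℝ) - k)⁻¹)
      = ((n:ℝ) - K)⁻¹ - (n:ℝ)⁻¹ := by
  have := Finset.sum_range_sub (f := fun k => ((n:ℝ) - k)⁻¹) K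
  simp only [Nat.cast_zero, sub_zero] at this
  rw [← this]
  apply Finset.sum_congr rfl
  intro k hk
  have hk' : k < n - 1 := lt_of_lt_of_le (Finset.mem_range.mp hk) hK
  have h1 : (k:ℝ) < (n:ℝ) - 1 := by
    have : (k:ℝ) < ((n-1 : ℕ) : ℝ) := by exact_mod_cast hk'
    rwa [Nat.cast_sub hn, Nat.cast_one] at this
  have h2 : ((n:ℝ) - 1 - k) ≠ 0 := by linarith
  have h3 : ((n:ℝ) - k) ≠ 0 := by linarith
  have h4 : ((n:ℝ) - ((k:ℝ)+1)) = (n:ℝ) - 1 - k := by ring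
  push_cast
  rw [h4]
  field_simp
  ring

lemma key (n i j : ℕ) (hn : 2 ≤ n) (hi : i < n) (hj : j < n) :
    ∑ k ∈ Finset.range n,
      ((if k = n - 1 then 0
        else if i = k then 1
        else if k < i then -(((n : ℝ) - 1 - k)⁻¹) else 0) *
        ((if k = j then (1:ℝ) else 0) - if k ≤ j then ((n : ℝ) - k)⁻¹ else 0))
    = (if i = j then 1 else 0) - (n:ℝ)⁻¹ := by
  set A : ℕ → ℝ := fun k =>
    (if k = n - 1 then 0 else if i = k then 1
     else if k < i then -(((n : ℝ) - 1 - k)⁻¹) else 0) with hA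
  set F : ℕ → ℝ := fun k => A k * ((n:ℝ) - k)⁻¹ with hF
  have expand : ∀ k, A k * ((if k = j then (1:ℝ) else 0) - if k ≤ j then ((n : ℝ) - k)⁻¹ else 0)
      = (if k = j then A k else 0) - (if k ≤ j then F k else 0) := by
    intro k
    rw [mul_sub, mul_ite, mul_one, mul_zero, mul_ite, mul_zero, hF]
  rw [Finset.sum_congr rfl (fun k _ => expand k), Finset.sum_sub_distrib,
    Finset.sum_ite_eq' (Finset.range n) j A, if_pos (Finset.mem_range.mpr hj)]
  have hsub : Finset.range (j+1) ⊆ Finset.range n := Finset.range_subset_range.mpr hj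
  have step2 : ∑ k ∈ Finset.range n, (if k ≤ j then F k else 0)
      = ∑ k ∈ Finset.range (j+1), F k := by
    rw [← Finset.sum_subset hsub (fun x _ hx => by
      rw [if_neg]; simp at hx; omega)]
    exact Finset.sum_congr rfl (fun k hk => by
      rw [if_pos]; exact Nat.lt_succ_iff.mp (Finset.mem_range.mp hk))
  rw [step2]
  have hAneg : ∀ k, k < i → A k = -(((n : ℝ) - 1 - k)⁻¹) := by
    intro k hk
    rw [hA]; simp only
    rw [if_neg (by omega), if_neg (by omega), if_pos hk]
  have sumlt : ∀ K, K ≤ i → ∑ k ∈ Finset.range K, F k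
      = (n:ℝ)⁻¹ - ((n:ℝ) - K)⁻¹ := by
    intro K hK
    have : ∑ k ∈ Finset.range K, F k
        = ∑ k ∈ Finset.range K, -((((n:ℝ) - 1 - k)⁻¹ * ((n:ℝ) - k)⁻¹)) := by
      refine Finset.sum_congr rfl (fun k hk => ?_)
      rw [hF]; simp only
      rw [hAneg k (lt_of_lt_of_le (Finset.mem_range.mp hk) hK), neg_mul]
    rw [this, Finset.sum_neg_distrib, tele n K (by omega) (by omega)]
    ring
  rcases lt_trichotomy i j with h | h | h
  · -- i < j
    have hAj : A j = 0 := by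
      rw [hA]; simp only
      split_ifs with h1 h2 h3 <;> first | rfl | omega
    have hAi : A i = 1 := by
      rw [hA]; simp only
      rw [if_neg (by omega)]; simp
    have split : ∑ k ∈ Finset.range (j+1), F k
        = ∑ k ∈ Finset.range (i+1), F k + ∑ k ∈ Finset.Ico (i+1) (j+1), F k := by
      rw [Finset.sum_range_add_sum_Ico F (by omega)]
    have hIco : ∑ k ∈ Finset.Ico (i+1) (j+1), F k = 0 := by
      refine Finset.sum_eq_zero (fun k hk => ?_)
      rw [hF]; simp only
      have hk' := Finset.mem_Ico.mp hk
      have : A k = 0 := by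
        rw [hA]; simp only
        split_ifs with h1 h2 h3 <;> first | rfl | omega
      rw [this, zero_mul]
    rw [if_neg (by omega), hAj, split, hIco, Finset.sum_range_succ,
      sumlt i le_rfl]
    simp only [hF, hAi, one_mul]
    ring
  · -- i = j
    subst h
    rw [if_pos rfl]
    by_cases hlast : i = n - 1
    · have hAj : A i = 0 := by rw [hA]; simp only; rw [if_pos hlast]
      have : ∑ k ∈ Finset.range (i+1), F k
          = ∑ k ∈ Finset.range i, F k + F i := Finset.sum_range_succ F i
      rw [hAj, this, sumlt i le_rfl, hF]
      simp only [hAj, zero_mul]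
      have : ((n:ℝ) - i) = 1 := by
        have : (i:ℝ) = (n:ℝ) - 1 := by
          have : ((i:ℕ):ℝ) = ((n-1:ℕ):ℝ) := by exact_mod_cast congrArg (Nat.cast (R:=ℝ)) hlast
          rwa [Nat.cast_sub (by omega), Nat.cast_one] at this
        linarith
      rw [this]
      norm_num
    · have hAi : A i = 1 := by
        rw [hA]; simp only; rw [if_neg hlast]; simp
      rw [Finset.sum_range_succ, sumlt i le_rfl]
      simp only [hF, hAi, one_mul]
      ring
  · -- j < i
    have hAj : A j = -(((n:ℝ) - 1 - j)⁻¹) := hAneg j h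
    have hsum : ∑ k ∈ Finset.range (j+1), F k
        = (n:ℝ)⁻¹ - ((n:ℝ) - (j+1))⁻¹ := by
      have := sumlt (j+1) (by omega)
      rwa [Nat.cast_add, Nat.cast_one] at this
    rw [if_neg (by omega), hAj, hsum]
    have : ((n:ℝ) - ((j:ℝ)+1)) = (n:ℝ) - 1 - j := by ring
    rw [this]
    ring

/-- `A_nᵀ (I - B_n)` is the projection orthogonal to the all-ones vector. -/
theorem matA_transpose_mul_id_sub_matB (n : ℕ) (hn : 2 ≤ n) :
    (matA n)ᵀ * (1 - matB n) = projPerpOnes n := by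
  ext i j
  simp only [Matrix.mul_apply, Matrix.transpose_apply, Matrix.sub_apply, Matrix.one_apply,
    matA, matB, projPerpOnes, Matrix.of_apply, Fin.le_def, Fin.lt_def, Fin.ext_iff]
  rw [Fin.sum_univ_eq_sum_range (fun k =>
    ((if k = n - 1 then 0
      else if (i:ℕ) = k then 1
      else if k < (i:ℕ) then -(((n : ℝ) - 1 - k)⁻¹) else 0) *
      ((if k = (j:ℕ) then (1:ℝ) else 0) - if k ≤ (j:ℕ) then ((n : ℝ) - k)⁻¹ else 0)))]
  exact key n i j hn i.isLt j.isLt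
end

section
/- For $n \ge 2$, let $B_n \in \mathbb{R}^{n\times n}$ have $i$th row $(\mathbf{0}_{i-1}, \frac{1}{n+1-i}\mathbf{1}_{n+1-i})$. Then $\frac{1}{n!}\sum_{\Pi} \Pi^\top B_n \Pi = I_n - \frac{n - H_n}{n-1}\mathcal{P}^\perp_{\mathbf{1}_n}$, where the sum is over all $n\times n$ permutation matrices, $H_n = \sum_{k=1}^n 1/k$, and $\mathcal{P}^\perp_{\mathbf{1}_n}$ projects orthogonally to the all-ones vector. -/
open Matrix

/-- The harmonic number `H_n`. -/
noncomputable def harmonic' (n : ℕ) : ℝ := ∑ k ∈ Finset.range n, (1 : ℝ) / (k + 1)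

open Equiv in
lemma sumA {m : ℕ} (f : Fin (m+1) → ℝ) :
    ∑ σ : Equiv.Perm (Fin (m+1)), f (σ 0) = (m.factorial : ℝ) * ∑ p, f p := by
  rw [← Equiv.sum_comp (Equiv.Perm.decomposeFin (n := m)).symm
      (fun σ => f (σ 0))]
  simp [Fintype.sum_prod_type, Finset.sum_const, Fintype.card_perm, mul_comm,
    Finset.mul_sum]

open Equiv in
lemma sumB {m : ℕ} (g : Fin (m+2) → Fin (m+2) → ℝ) :
    ∑ σ : Equiv.Perm (Fin (m+2)), g (σ 0) (σ 1) =
      (m.factorial : ℝ) * ∑ p, ((∑ b, g p b) - g p p) := by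
  rw [← Equiv.sum_comp (Equiv.Perm.decomposeFin (n := m+1)).symm
      (fun σ => g (σ 0) (σ 1))]
  have h1 : ∀ (p : Fin (m+2)) (e : Perm (Fin (m+1))),
      Equiv.Perm.decomposeFin.symm (p, e) 1 = Equiv.swap 0 p ((e 0).succ) := by
    intro p e
    have : (1 : Fin (m+2)) = (0 : Fin (m+1)).succ := rfl
    rw [this, Equiv.Perm.decomposeFin_symm_apply_succ]
  simp only [Fintype.sum_prod_type, Equiv.Perm.decomposeFin_symm_apply_zero, h1]
  rw [Finset.mul_sum]
  refine Finset.sum_congr rfl fun p _ => ?_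
  rw [sumA (fun q => g p (Equiv.swap 0 p q.succ))]
  congr 1
  have := Fin.sum_univ_succ (fun x : Fin (m+2) => g p (Equiv.swap 0 p x))
  have h2 : ∑ x : Fin (m+2), g p (Equiv.swap 0 p x) = ∑ b, g p b :=
    Equiv.sum_comp (Equiv.swap 0 p) (fun b => g p b)
  rw [h2] at this
  simp only [Equiv.swap_apply_left] at this
  linarith

lemma conj_eq (n : ℕ) (π : Equiv.Perm (Fin n)) :
    (π.permMatrix ℝ)ᵀ * matB n * π.permMatrix ℝ = (matB n).submatrix ⇑π⁻¹ ⇑π⁻¹ := by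
  have ht : (π.permMatrix ℝ)ᵀ = (π⁻¹).permMatrix ℝ := by
    rw [Equiv.Perm.permMatrix, Equiv.Perm.permMatrix, ← PEquiv.toMatrix_symm,
      ← Equiv.toPEquiv_symm]
    rfl
  rw [ht, Equiv.Perm.permMatrix, Equiv.Perm.permMatrix,
    PEquiv.toMatrix_toPEquiv_mul, PEquiv.mul_toMatrix_toPEquiv,
    submatrix_submatrix]
  rfl

lemma matB_row_sum (n : ℕ) (p : Fin n) : ∑ b, matB n p b = 1 := by
  have hp : (p : ℕ) < n := p.isLt
  have h0 : ∑ b, matB n p b = ∑ b : Fin n, if (p:ℕ) ≤ (b:ℕ) then ((n:ℝ) - p)⁻¹ else 0 := by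
    refine Finset.sum_congr rfl fun b _ => ?_
    show (if p ≤ b then ((n : ℝ) - p)⁻¹ else 0) = _
    simp only [Fin.le_def]
  rw [h0, Fin.sum_univ_eq_sum_range (fun k => if (p:ℕ) ≤ k then ((n:ℝ) - p)⁻¹ else 0),
    ← Finset.sum_filter]
  have hf : (Finset.range n).filter (fun k => (p:ℕ) ≤ k) = Finset.Ico (p:ℕ) n := by
    ext k; simp [Finset.mem_Ico, and_comm]
  rw [hf, Finset.sum_const, Nat.card_Ico, nsmul_eq_mul]
  have hcast : ((n - (p:ℕ) : ℕ) : ℝ) = (n : ℝ) - p := by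
    rw [Nat.cast_sub hp.le]
  rw [hcast, mul_inv_cancel₀]
  have : (p : ℝ) < n := by exact_mod_cast hp
  linarith

lemma matB_diag_sum (n : ℕ) : ∑ p : Fin n, matB n p p = harmonic' n := by
  have h0 : ∑ p : Fin n, matB n p p = ∑ k ∈ Finset.range n, ((n:ℝ) - k)⁻¹ := by
    rw [← Fin.sum_univ_eq_sum_range (fun k => ((n:ℝ) - k)⁻¹)]
    refine Finset.sum_congr rfl fun p _ => ?_
    show (if p ≤ p then ((n : ℝ) - p)⁻¹ else 0) = _
    simp
  rw [h0, ← Finset.sum_range_reflect]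
  refine Finset.sum_congr rfl fun k hk => ?_
  rw [Finset.mem_range] at hk
  have h1 : n - 1 - k = n - (k + 1) := by omega
  have h2 : ((n - (k+1) : ℕ) : ℝ) = (n : ℝ) - (k + 1) := by
    rw [Nat.cast_sub (by omega)]; push_cast; ring
  rw [h1, h2, one_div]
  ring_nf

/-- Permutation-averaging identity for the running-mean matrix:
`(1/n!) ∑_Π Πᵀ B_n Π = I - ((n - H_n)/(n-1)) P^⊥_{1_n}`. -/
theorem perm_average_matB (n : ℕ) (hn : 2 ≤ n) :
    ((n.factorial : ℝ))⁻¹ •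
        ∑ π : Equiv.Perm (Fin n), (π.permMatrix ℝ)ᵀ * matB n * π.permMatrix ℝ =
      1 - (((n : ℝ) - harmonic' n) / ((n : ℝ) - 1)) • projPerpOnes n := by
  obtain ⟨m, rfl⟩ : ∃ m, n = m + 2 := ⟨n - 2, by omega⟩
  set N : ℝ := ((m : ℝ) + 2) with hN
  have hNcast : ((m + 2 : ℕ) : ℝ) = N := by push_cast [hN]; ring
  set H : ℝ := harmonic' (m + 2) with hH
  have hFm : ((m.factorial : ℝ)) ≠ 0 := Nat.cast_ne_zero.mpr m.factorial_ne_zero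
  have hfac : (((m + 2).factorial : ℝ)) = ((m:ℝ)+2) * ((m:ℝ)+1) * m.factorial := by
    rw [show m + 2 = (m+1) + 1 from rfl, Nat.factorial_succ, Nat.factorial_succ]
    push_cast; ring
  ext i j
  simp only [conj_eq, Matrix.smul_apply, Matrix.sum_apply, Matrix.submatrix_apply,
    smul_eq_mul]
  have hinv : ∑ π : Equiv.Perm (Fin (m+2)), matB (m+2) (π⁻¹ i) (π⁻¹ j)
      = ∑ π : Equiv.Perm (Fin (m+2)), matB (m+2) (π i) (π j) :=
    Equiv.sum_comp (Equiv.inv (Equiv.Perm (Fin (m+2))))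
      (fun π => matB (m+2) (π i) (π j))
  rw [hinv]
  have hRHS : (1 - ((N - H) / (N - 1)) • projPerpOnes (m+2)) i j
      = (if i = j then (1:ℝ) else 0) - (N - H) / (N - 1) *
          ((if i = j then (1:ℝ) else 0) - N⁻¹) := by
    simp [projPerpOnes, Matrix.sub_apply, Matrix.smul_apply, Matrix.one_apply, hNcast]
  rw [hNcast, hRHS]
  rcases eq_or_ne i j with rfl | hij
  · -- diagonal
    have hred : ∑ π : Equiv.Perm (Fin (m+2)), matB (m+2) (π i) (π i)
        = ∑ π : Equiv.Perm (Fin (m+2)), matB (m+2) (π 0) (π 0) := by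
      rw [← Equiv.sum_comp (Equiv.mulRight (Equiv.swap (0 : Fin (m+2)) i))
        (fun σ => matB (m+2) (σ 0) (σ 0))]
      refine Finset.sum_congr rfl fun σ _ => ?_
      simp [Equiv.Perm.mul_apply, Equiv.swap_apply_left]
    rw [hred, sumA (m := m + 1) (fun a => matB (m+2) a a), matB_diag_sum, ← hH]
    simp only [eq_self_iff_true, if_true]
    have h1 : (((m+1).factorial : ℝ)) = ((m:ℝ)+1) * m.factorial := by
      rw [Nat.factorial_succ]; push_cast; ring
    rw [hfac, h1]
    have hN1 : N - 1 ≠ 0 := by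
      have h0 : (0:ℝ) ≤ (m:ℝ) := Nat.cast_nonneg m
      rw [hN]; intro h; linarith
    have hNne : N ≠ 0 := by rw [hN]; positivity
    field_simp
    ring
  · -- off-diagonal
    have hj' : Equiv.swap (0 : Fin (m+2)) i j ≠ 0 := by
      intro h
      apply hij
      have := congrArg (Equiv.swap (0 : Fin (m+2)) i) h
      rw [Equiv.swap_apply_self, Equiv.swap_apply_left] at this
      exact this.symm
    set τ : Equiv.Perm (Fin (m+2)) :=
      Equiv.swap 0 i * Equiv.swap 1 (Equiv.swap 0 i j) with hτ
    have hτ0 : τ 0 = i := by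
      rw [hτ, Equiv.Perm.mul_apply,
        Equiv.swap_apply_of_ne_of_ne (by simp) (Ne.symm hj'), Equiv.swap_apply_left]
    have hτ1 : τ 1 = j := by
      rw [hτ, Equiv.Perm.mul_apply, Equiv.swap_apply_left, Equiv.swap_apply_self]
    have hred : ∑ π : Equiv.Perm (Fin (m+2)), matB (m+2) (π i) (π j)
        = ∑ π : Equiv.Perm (Fin (m+2)), matB (m+2) (π 0) (π 1) := by
      rw [← Equiv.sum_comp (Equiv.mulRight τ)
        (fun σ => matB (m+2) (σ 0) (σ 1))]
      refine Finset.sum_congr rfl fun σ _ => ?_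
      simp [Equiv.Perm.mul_apply, hτ0, hτ1]
    rw [hred, sumB (fun a b => matB (m+2) a b)]
    have hsum : ∑ p : Fin (m+2), ((∑ b, matB (m+2) p b) - matB (m+2) p p)
        = N - H := by
      rw [Finset.sum_sub_distrib, matB_diag_sum, ← hH]
      simp [matB_row_sum, hNcast]
    rw [hsum, if_neg hij]
    have hN1 : N - 1 ≠ 0 := by
      have h0 : (0:ℝ) ≤ (m:ℝ) := Nat.cast_nonneg m
      rw [hN]; intro h; linarith
    have hNne : N ≠ 0 := by rw [hN]; positivity
    rw [hfac]
    have : N - 1 = (m:ℝ) + 1 := by rw [hN]; ring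
    field_simp [this]
    ring
end
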